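/- The theory HA + ¬θ + MP is consistent and has the existence property (if HA + ¬θ + MP ⊢_i ∃x ψ(x) for an L-sentence ∃x ψ(x), then HA + ¬θ + MP ⊢_i ψ(n̄) for some natural number n) and the disjunction property (if HA + ¬θ + MP ⊢_i φ ∨ ψ for L-sentences φ, ψ, then HA + ¬θ + MP ⊢_i φ or HA + ¬θ + MP ⊢_i ψ). -/

import Mathlib

/- Common framework: syntax and semantics (classical and Kripke) for the language L
of Primitive Recursive Arithmetic, with intuitionistic/classical natural deduction,
Heyting/Peano arithmetic, realizability-related schemata (ECT₀, MP),
diagrams, provability predicates and universal Kripke models. -/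

namespace Pap

/-- Syntactic codes ("symbols") of primitive recursive functions: the language L
has a function symbol for every primitive recursive function. -/
inductive PRCode : ℕ → Type
  | zero : PRCode 0
  | succ : PRCode 1
  | proj : {n : ℕ} → Fin n → PRCode n
  | comp : {m n : ℕ} → PRCode m → (Fin m → PRCode n) → PRCode n
  | prec : {n : ℕ} → PRCode n → PRCode (n + 2) → PRCode (n + 1)

/-- The primitive recursive function denoted by a code. -/
def PRCode.eval : {n : ℕ} → PRCode n → (Fin n → ℕ) → ℕ
  | _, .zero, _ => 0
  | _, .succ, v => v 0 + 1
  | _, .proj i, v => v i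
  | _, .comp g h, v => g.eval fun i => (h i).eval v
  | _, .prec g h, v =>
      Nat.rec (motive := fun _ => ℕ) (g.eval fun i => v i.succ)
        (fun y ih => h.eval (Fin.cons y (Fin.cons ih fun i => v i.succ))) (v 0)

/-- Terms of L augmented with constants from `C` (take `C := Empty` for L itself,
and `C := M` for the language L(M)).  Variables are de Bruijn indices. -/
inductive Term (C : Type) : Type
  | var : ℕ → Term C
  | const : C → Term C
  | func : {n : ℕ} → PRCode n → (Fin n → Term C) → Term C

/-- Formulas of L(C), with de Bruijn-style quantifiers (the only relation is `=`). -/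
inductive Formula (C : Type) : Type
  | falsum : Formula C
  | eq : Term C → Term C → Formula C
  | conj : Formula C → Formula C → Formula C
  | disj : Formula C → Formula C → Formula C
  | impl : Formula C → Formula C → Formula C
  | all : Formula C → Formula C
  | ex : Formula C → Formula C

variable {C D : Type}

def Formula.neg (φ : Formula C) : Formula C := φ.impl .falsum

def Formula.iff (φ ψ : Formula C) : Formula C := (φ.impl ψ).conj (ψ.impl φ)

/-- Simultaneous substitution in terms. -/
def Term.subst (σ : ℕ → Term C) : Term C → Term C
  | .var n => σ n
  | .const c => .const c
  | .func f ts => .func f fun i => (ts i).subst σ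

/-- Shift all variables up by one. -/
def Term.shift : Term C → Term C := Term.subst fun n => .var (n + 1)

/-- Lift a substitution under a binder. -/
def liftSubst (σ : ℕ → Term C) : ℕ → Term C
  | 0 => .var 0
  | n + 1 => (σ n).shift

/-- Simultaneous substitution in formulas. -/
def Formula.subst (σ : ℕ → Term C) : Formula C → Formula C
  | .falsum => .falsum
  | .eq t u => .eq (t.subst σ) (u.subst σ)
  | .conj φ ψ => .conj (φ.subst σ) (ψ.subst σ)
  | .disj φ ψ => .disj (φ.subst σ) (ψ.subst σ)
  | .impl φ ψ => .impl (φ.subst σ) (ψ.subst σ)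
  | .all φ => .all (φ.subst (liftSubst σ))
  | .ex φ => .ex (φ.subst (liftSubst σ))

/-- Shift all free variables of a formula up by one. -/
def Formula.shiftF : Formula C → Formula C := Formula.subst fun n => .var (n + 1)

/-- Substitute the term `t` for the variable `0` (lowering the other variables). -/
def subst0 (t : Term C) (φ : Formula C) : Formula C :=
  φ.subst fun n => match n with
    | 0 => t
    | m + 1 => .var m

/-- All free variables of a term are `< k`. -/
def Term.fvBelow (k : ℕ) : Term C → Prop
  | .var n => n < k
  | .const _ => True
  | .func _ ts => ∀ i, (ts i).fvBelow k

/-- All free variables of a formula are `< k`. -/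
def Formula.fvBelow : ℕ → Formula C → Prop
  | _, .falsum => True
  | k, .eq t u => t.fvBelow k ∧ u.fvBelow k
  | k, .conj φ ψ => φ.fvBelow k ∧ ψ.fvBelow k
  | k, .disj φ ψ => φ.fvBelow k ∧ ψ.fvBelow k
  | k, .impl φ ψ => φ.fvBelow k ∧ ψ.fvBelow k
  | k, .all φ => φ.fvBelow (k + 1)
  | k, .ex φ => φ.fvBelow (k + 1)

/-- A sentence is a formula with no free variables. -/
def Formula.IsClosed (φ : Formula C) : Prop := φ.fvBelow 0

/-- The variable `k` occurs free in a term. -/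
def Term.freeIn (k : ℕ) : Term C → Prop
  | .var n => n = k
  | .const _ => False
  | .func _ ts => ∃ i, (ts i).freeIn k

/-- The variable `k` occurs free in a formula. -/
def Formula.freeIn : ℕ → Formula C → Prop
  | _, .falsum => False
  | k, .eq t u => t.freeIn k ∨ u.freeIn k
  | k, .conj φ ψ => φ.freeIn k ∨ ψ.freeIn k
  | k, .disj φ ψ => φ.freeIn k ∨ ψ.freeIn k
  | k, .impl φ ψ => φ.freeIn k ∨ ψ.freeIn k
  | k, .all φ => φ.freeIn (k + 1)
  | k, .ex φ => φ.freeIn (k + 1)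

/-- Map constants along a function. -/
def Term.mapC (g : C → D) : Term C → Term D
  | .var n => .var n
  | .const c => .const (g c)
  | .func f ts => .func f fun i => (ts i).mapC g

def Formula.mapC (g : C → D) : Formula C → Formula D
  | .falsum => .falsum
  | .eq t u => .eq (t.mapC g) (u.mapC g)
  | .conj φ ψ => .conj (φ.mapC g) (ψ.mapC g)
  | .disj φ ψ => .disj (φ.mapC g) (ψ.mapC g)
  | .impl φ ψ => .impl (φ.mapC g) (ψ.mapC g)
  | .all φ => .all (φ.mapC g)
  | .ex φ => .ex (φ.mapC g)

/-- View an L-formula as an L(C)-formula. -/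
def ofL : Formula Empty → Formula C := Formula.mapC fun e => e.elim

/-! ### Natural deduction, intuitionistic (`cl := False`) and classical (`cl := True`) -/

inductive Derives (cl : Prop) : Set (Formula C) → Formula C → Prop
  | hyp {Γ : Set (Formula C)} {φ : Formula C} : φ ∈ Γ → Derives cl Γ φ
  | implI {Γ} {φ ψ : Formula C} : Derives cl (insert φ Γ) ψ → Derives cl Γ (φ.impl ψ)
  | implE {Γ} {φ ψ : Formula C} :
      Derives cl Γ (φ.impl ψ) → Derives cl Γ φ → Derives cl Γ ψ
  | conjI {Γ} {φ ψ : Formula C} :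
      Derives cl Γ φ → Derives cl Γ ψ → Derives cl Γ (φ.conj ψ)
  | conjE1 {Γ} {φ ψ : Formula C} : Derives cl Γ (φ.conj ψ) → Derives cl Γ φ
  | conjE2 {Γ} {φ ψ : Formula C} : Derives cl Γ (φ.conj ψ) → Derives cl Γ ψ
  | disjI1 {Γ} {φ ψ : Formula C} : Derives cl Γ φ → Derives cl Γ (φ.disj ψ)
  | disjI2 {Γ} {φ ψ : Formula C} : Derives cl Γ ψ → Derives cl Γ (φ.disj ψ)
  | disjE {Γ} {φ ψ χ : Formula C} :
      Derives cl Γ (φ.disj ψ) → Derives cl (insert φ Γ) χ → Derives cl (insert ψ Γ) χ →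
      Derives cl Γ χ
  | falsumE {Γ} {φ : Formula C} : Derives cl Γ .falsum → Derives cl Γ φ
  | allI {Γ} {φ : Formula C} :
      Derives cl (Formula.shiftF '' Γ) φ → Derives cl Γ (.all φ)
  | allE {Γ} {φ : Formula C} (t : Term C) :
      Derives cl Γ (.all φ) → Derives cl Γ (subst0 t φ)
  | exI {Γ} {φ : Formula C} (t : Term C) :
      Derives cl Γ (subst0 t φ) → Derives cl Γ (.ex φ)
  | exE {Γ} {φ χ : Formula C} :
      Derives cl Γ (.ex φ) →
      Derives cl (insert φ (Formula.shiftF '' Γ)) (Formula.shiftF χ) → Derives cl Γ χ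
  | eqRefl {Γ} (t : Term C) : Derives cl Γ (.eq t t)
  | eqSubst {Γ} {φ : Formula C} (t u : Term C) :
      Derives cl Γ (.eq t u) → Derives cl Γ (subst0 t φ) → Derives cl Γ (subst0 u φ)
  | dne {Γ} {φ : Formula C} :
      cl → Derives cl Γ (Formula.neg (Formula.neg φ)) → Derives cl Γ φ

/-- Intuitionistic provability `T ⊢ᵢ φ`. -/
def iProves (T : Set (Formula C)) (φ : Formula C) : Prop := Derives False T φ

/-- Classical provability `T ⊢_c φ`. -/
def cProves (T : Set (Formula C)) (φ : Formula C) : Prop := Derives True T φ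

/-- Consistency of an intuitionistic theory. -/
def IConsistent (T : Set (Formula C)) : Prop := ¬ iProves T .falsum

/-! ### Classical structures and Tarski satisfaction -/

/-- A classical L-structure: interprets every function symbol of L. -/
structure Struc where
  carrier : Type
  interp : {n : ℕ} → PRCode n → (Fin n → carrier) → carrier

/-- Extend a valuation by one value (for the fresh de Bruijn variable 0). -/
def vcons {α : Type*} (a : α) (v : ℕ → α) : ℕ → α
  | 0 => a
  | n + 1 => v n

def Term.val (S : Struc) (cI : C → S.carrier) (v : ℕ → S.carrier) : Term C → S.carrier
  | .var n => v n
  | .const c => cI c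
  | .func f ts => S.interp f fun i => (ts i).val S cI v

def Formula.Sat (S : Struc) (cI : C → S.carrier) : (ℕ → S.carrier) → Formula C → Prop
  | _, .falsum => False
  | v, .eq t u => t.val S cI v = u.val S cI v
  | v, .conj φ ψ => φ.Sat S cI v ∧ ψ.Sat S cI v
  | v, .disj φ ψ => φ.Sat S cI v ∨ ψ.Sat S cI v
  | v, .impl φ ψ => φ.Sat S cI v → ψ.Sat S cI v
  | v, .all φ => ∀ a, φ.Sat S cI (vcons a v)
  | v, .ex φ => ∃ a, φ.Sat S cI (vcons a v)

/-- `M ⊨ φ` for an L-formula `φ` (under all valuations). -/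
def Struc.ModelsL (S : Struc) (φ : Formula Empty) : Prop :=
  ∀ v, Formula.Sat S (fun e => e.elim) v φ

def Struc.ModelsLSet (S : Struc) (T : Set (Formula Empty)) : Prop :=
  ∀ φ ∈ T, S.ModelsL φ

/-- `M ⊨ φ` for an L(M)-formula `φ`. -/
def Struc.ModelsM (S : Struc) (φ : Formula S.carrier) : Prop :=
  ∀ v, Formula.Sat S id v φ

/-- The standard model ℕ. -/
def stdModel : Struc := { carrier := ℕ, interp := fun f v => f.eval v }

/-! ### Arithmetical vocabulary and axioms -/

def zeroT : Term C := .func .zero ![]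

def succT (t : Term C) : Term C := .func .succ fun _ => t

/-- Numerals. -/
def numeral : ℕ → Term C
  | 0 => zeroT
  | n + 1 => succT (numeral n)

def varsF (n : ℕ) : Fin n → Term C := fun i => .var i.1

/-- `closeN k φ` = `∀`-closure of the first `k` variables. -/
def closeN : ℕ → Formula C → Formula C
  | 0, φ => φ
  | k + 1, φ => closeN k (.all φ)

/-- Axioms of Robinson arithmetic Q (the part about `0` and successor; the
recursion equations of `+`, `·` and all other primitive recursive function
symbols are provided by `prDefAx`). -/
def QAx : Set (Formula Empty) :=
  { Formula.all ((Formula.eq (succT (.var 0)) zeroT).neg),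
    Formula.all (.all ((Formula.eq (succT (.var 1)) (succT (.var 0))).impl
      (.eq (.var 1) (.var 0)))),
    Formula.all ((Formula.eq (.var 0) zeroT).disj
      (.ex (.eq (.var 1) (succT (.var 0))))) }

/-- The defining axioms of a primitive recursive function symbol. -/
def PRCode.defAx : {n : ℕ} → PRCode n → List (Formula Empty)
  | _, .zero => []
  | _, .succ => []
  | n, .proj i => [closeN n (.eq (.func (.proj i) (varsF n)) (.var i.1))]
  | _, @PRCode.comp m n g h =>
      [closeN n (.eq (.func (.comp g h) (varsF n)) (.func g fun i => .func (h i) (varsF n)))]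
  | _, @PRCode.prec n g h =>
      [ closeN n (.eq (.func (.prec g h) (Fin.cons zeroT (varsF n))) (.func g (varsF n))),
        closeN (n + 1) (.eq
          (.func (.prec g h) (Fin.cons (succT (.var 0)) fun i : Fin n => .var (i.1 + 1)))
          (.func h (Fin.cons (.var 0) (Fin.cons
            (.func (.prec g h) (Fin.cons (.var 0) fun i : Fin n => .var (i.1 + 1)))
            fun i : Fin n => .var (i.1 + 1))))) ]

/-- Defining axioms of all primitive recursive functions. -/
def prDefAx : Set (Formula Empty) :=
  {φ | ∃ (n : ℕ) (c : PRCode n), φ ∈ c.defAx}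

/-- `I_φ := φ(0) ∧ ∀x(φ(x) → φ(Sx)) → ∀x φ(x)`, induction on variable `0`. -/
def indBody (φ : Formula C) : Formula C :=
  ((subst0 zeroT φ).conj (.all (φ.impl (φ.subst fun n => match n with
      | 0 => succT (.var 0)
      | m + 1 => .var (m + 1))))).impl (.all φ)

/-- The full induction schema (universally closed). -/
def indAxioms : Set (Formula Empty) :=
  {ψ | ∃ (φ : Formula Empty) (k : ℕ), ψ = closeN k (indBody φ)}

/-- Induction for atomic formulas. -/
def atomIndAxioms : Set (Formula Empty) :=
  {ψ | ∃ (t u : Term Empty) (k : ℕ), ψ = closeN k (indBody (.eq t u))}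

/-- The (non-logical) axioms of HA (and of PA). -/
def HAax : Set (Formula Empty) := QAx ∪ prDefAx ∪ indAxioms

/-- The (non-logical) axioms of iPRA (and of PRA). -/
def iPRAax : Set (Formula Empty) := QAx ∪ prDefAx ∪ atomIndAxioms

/-- `PA ⊢_c φ`. -/
def PAproves (φ : Formula Empty) : Prop := cProves HAax φ

/-- `PRA ⊢_c φ`. -/
def PRAproves (φ : Formula Empty) : Prop := cProves iPRAax φ

/-! ### Formula classes -/

def Formula.IsQF : Formula C → Prop
  | .falsum => True
  | .eq _ _ => True
  | .conj φ ψ => φ.IsQF ∧ ψ.IsQF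
  | .disj φ ψ => φ.IsQF ∧ ψ.IsQF
  | .impl φ ψ => φ.IsQF ∧ ψ.IsQF
  | .all _ => False
  | .ex _ => False

def Formula.IsAtomic (φ : Formula C) : Prop :=
  (∃ t u, φ = .eq t u) ∨ φ = .falsum

inductive IsSigma1 : Formula C → Prop
  | of_qf {φ : Formula C} : φ.IsQF → IsSigma1 φ
  | ex {φ : Formula C} : IsSigma1 φ → IsSigma1 (.ex φ)

inductive IsPi1 : Formula C → Prop
  | of_qf {φ : Formula C} : φ.IsQF → IsPi1 φ
  | all {φ : Formula C} : IsPi1 φ → IsPi1 (.all φ)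

inductive IsPi2 : Formula C → Prop
  | of_sigma1 {φ : Formula C} : IsSigma1 φ → IsPi2 φ
  | all {φ : Formula C} : IsPi2 φ → IsPi2 (.all φ)

/-- `Th_Π₁(PA)`. -/
def ThPi1PA : Set (Formula Empty) := {φ | IsPi1 φ ∧ φ.IsClosed ∧ PAproves φ}

/-- `Th_Π₂(PA)`. -/
def ThPi2PA : Set (Formula Empty) := {φ | IsPi2 φ ∧ φ.IsClosed ∧ PAproves φ}

/-- `Th_Π₂(ℕ)`. -/
def ThPi2Std : Set (Formula Empty) := {φ | IsPi2 φ ∧ φ.IsClosed ∧ stdModel.ModelsL φ}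

/-! ### Kleene's T-predicate, ECT₀, Markov's principle, IΔ₁ -/

/-- Kleene's T-predicate on ℕ: `u` codes a (length, value) pair of a halting
computation of machine `e` on input `x`. -/
def KleeneT (e x u : ℕ) : Prop :=
  Nat.Partrec.Code.evaln u.unpair.1 (Denumerable.ofNat Nat.Partrec.Code e) x =
    some u.unpair.2

/-- `tc`/`uc` are L-symbols for (the characteristic function of) Kleene's
T-predicate and the result-extracting function U. -/
def KleeneTU (tc : PRCode 3) (uc : PRCode 1) : Prop :=
  (∀ e x u : ℕ, tc.eval ![e, x, u] = 0 ↔ KleeneT e x u) ∧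
    ∀ u : ℕ, uc.eval ![u] = u.unpair.2

/-- Almost negative formulas: no `∨`, and `∃` only immediately in front of atomic
formulas. -/
def Formula.AlmostNeg : Formula C → Prop
  | .falsum => True
  | .eq _ _ => True
  | .conj φ ψ => φ.AlmostNeg ∧ ψ.AlmostNeg
  | .disj _ _ => False
  | .impl φ ψ => φ.AlmostNeg ∧ ψ.AlmostNeg
  | .all φ => φ.AlmostNeg
  | .ex φ => φ.IsAtomic

/-- An instance of ECT₀:
`∀x(φ(x,v̄) → ∃y ψ(x,y,v̄)) → ∃z ∀x(φ(x,v̄) → ∃u(T(z,x,u) ∧ ψ(x,U(u),v̄)))`.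
Convention: in `φ` the variable `0` is `x` and `1+i` is `vᵢ`; in `ψ` the
variable `0` is `y`, `1` is `x` and `2+i` is `vᵢ`. -/
def ectInstance (tc : PRCode 3) (uc : PRCode 1) (φ ψ : Formula C) : Formula C :=
  Formula.impl
    (.all (φ.impl (.ex ψ)))
    (.ex (.all (Formula.impl
      (φ.subst fun n => match n with
        | 0 => .var 0
        | m + 1 => .var (m + 2))
      (.ex (Formula.conj
        (.eq (.func tc ![Term.var 2, Term.var 1, Term.var 0]) zeroT)
        (ψ.subst fun n => match n with
          | 0 => .func uc ![Term.var 0]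
          | 1 => .var 1
          | m + 2 => .var (m + 3)))))))

/-- The schema ECT₀ (universally closed over the parameters `v̄`). -/
def ECT0 (tc : PRCode 3) (uc : PRCode 1) : Set (Formula Empty) :=
  {χ | ∃ (φ ψ : Formula Empty) (k : ℕ),
      φ.AlmostNeg ∧ χ = closeN k (ectInstance tc uc φ ψ)}

/-- Markov's principle (schema, universally closed over parameters). -/
def MPax : Set (Formula Empty) :=
  {χ | ∃ (φ : Formula Empty) (k : ℕ),
      χ = closeN k (((Formula.all (φ.disj φ.neg)).conj
        (Formula.neg (Formula.neg (.ex φ)))).impl (.ex φ))}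

/-- The classical theory IΔ₁: Q + defining axioms + Δ₁-induction
`∀ȳ[∀x(φ(x,ȳ) ↔ ¬ψ(x,ȳ)) → I_φ]` for Σ₁-formulas `φ, ψ`. -/
def IDelta1 : Set (Formula Empty) :=
  QAx ∪ prDefAx ∪
    {χ | ∃ (φ ψ : Formula Empty) (k : ℕ), IsSigma1 φ ∧ IsSigma1 ψ ∧
        χ = closeN k ((Formula.all (φ.iff ψ.neg)).impl (indBody φ))}

/-! ### Diagrams and the theory `T_M = HA + ECT₀ + Diag(M)` -/

/-- The atomic diagram of an L-structure `M` (as a set of L(M)-sentences). -/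
def diag (M : Struc) : Set (Formula M.carrier) :=
  {φ | ∃ t u : Term M.carrier, t.fvBelow 0 ∧ u.fvBelow 0 ∧
      ((φ = .eq t u ∧ M.ModelsM (.eq t u)) ∨
        (φ = (Formula.eq t u).neg ∧ ¬ M.ModelsM (.eq t u)))}

/-- `T_M := HA + ECT₀ + Diag(M)`, a theory in the language L(M). -/
def TMtheory (tc : PRCode 3) (uc : PRCode 1) (M : Struc) : Set (Formula M.carrier) :=
  (ofL '' (HAax ∪ ECT0 tc uc)) ∪ diag M

/-! ### Kripke models -/

/-- A Kripke model for the language L(C) on the frame `(W, le)`. -/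
structure Kripke (C W : Type) (le : W → W → Prop) where
  ne : Nonempty W
  le_refl : ∀ w, le w w
  le_trans : ∀ {a b c}, le a b → le b c → le a c
  le_antisymm : ∀ {a b}, le a b → le b a → a = b
  dom : W → Type
  emb : ∀ {a b}, le a b → dom a → dom b
  emb_refl : ∀ (w) (x : dom w), emb (le_refl w) x = x
  emb_trans : ∀ {a b c} (h₁ : le a b) (h₂ : le b c) (x : dom a),
      emb (le_trans h₁ h₂) x = emb h₂ (emb h₁ x)
  emb_inj : ∀ {a b} (h : le a b), Function.Injective (emb h)
  interp : ∀ (w) {n : ℕ}, PRCode n → (Fin n → dom w) → dom w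
  interp_emb : ∀ {a b} (h : le a b) {n : ℕ} (f : PRCode n) (v : Fin n → dom a),
      emb h (interp a f v) = interp b f fun i => emb h (v i)
  cInt : ∀ w, C → dom w
  cInt_emb : ∀ {a b} (h : le a b) (c : C), emb h (cInt a c) = cInt b c

variable {W : Type} {le : W → W → Prop}

/-- The classical structure attached to a node. -/
def Kripke.strucAt (K : Kripke C W le) (w : W) : Struc :=
  { carrier := K.dom w, interp := fun f v => K.interp w f v }

/-- Kripke forcing `w ⊩ φ [v]`. -/
def Kripke.force (K : Kripke C W le) : Formula C → (w : W) → (ℕ → K.dom w) → Prop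
  | .falsum, _, _ => False
  | .eq t u, w, v =>
      Term.val (K.strucAt w) (K.cInt w) v t = Term.val (K.strucAt w) (K.cInt w) v u
  | .conj φ ψ, w, v => K.force φ w v ∧ K.force ψ w v
  | .disj φ ψ, w, v => K.force φ w v ∨ K.force ψ w v
  | .impl φ ψ, w, v => ∀ w' (h : le w w'),
      K.force φ w' (fun n => K.emb h (v n)) → K.force ψ w' (fun n => K.emb h (v n))
  | .all φ, w, v => ∀ w' (h : le w w') (a : K.dom w'),
      K.force φ w' (vcons a fun n => K.emb h (v n))
  | .ex φ, w, v => ∃ a, K.force φ w (vcons a v)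

/-- A node forces a formula (under every valuation). -/
def Kripke.ForcesAt (K : Kripke C W le) (w : W) (φ : Formula C) : Prop :=
  ∀ v, K.force φ w v

/-- `K ⊩ φ`: every node forces `φ`. -/
def Kripke.Forces (K : Kripke C W le) (φ : Formula C) : Prop :=
  ∀ w, K.ForcesAt w φ

/-- `r` is a root. -/
def Kripke.Rooted (K : Kripke C W le) (r : W) : Prop := ∀ w, le r w

/-- The classical structure attached to the node `r` is (isomorphic to) `M`,
with constants interpreted by `cI`. -/
def Kripke.rootIs (K : Kripke C W le) (r : W) (M : Struc) (cI : C → M.carrier) : Prop :=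
  ∃ e : K.dom r ≃ M.carrier,
    (∀ {n : ℕ} (f : PRCode n) (v : Fin n → K.dom r),
        e (K.interp r f v) = M.interp f fun i => e (v i)) ∧
    ∀ c, e (K.cInt r c) = cI c

/-- The model is locally `S` (every node's classical structure models the
classical L-theory `S`). -/
def Kripke.locally (K : Kripke C W le) (S : Set (Formula Empty)) : Prop :=
  ∀ w, (K.strucAt w).ModelsLSet S

/-- The characteristic properties of Smoryński-style universal ("collection")
models `K(M, S)`: a root `r` whose structure is `M`, every other node lies in
one of the chosen countermodels (hence forces `S`), and for every sentence `φ`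
unprovable in `S` some non-root node fails to force `φ` (coming from the fixed
countermodel `K_φ ⊩ S`, `K_φ ⊮ φ`). -/
structure IsUniversalModel (M : Struc) (S : Set (Formula M.carrier))
    {W : Type} {le : W → W → Prop} (K : Kripke M.carrier W le) (r : W) : Prop where
  rooted : K.Rooted r
  rootM : K.rootIs r M id
  cover : ∀ w, w ≠ r → ∀ φ ∈ S, K.ForcesAt w φ
  counter : ∀ φ : Formula M.carrier, φ.IsClosed → ¬ iProves S φ →
      ∃ w, w ≠ r ∧ ¬ K.ForcesAt w φ

/-! ### Gödel numbering, r.e. theories, provability predicates -/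

def encList : List ℕ → ℕ := fun l => Encodable.encode l

def PRCode.enc : {n : ℕ} → PRCode n → ℕ
  | _, .zero => Nat.pair 0 0
  | _, .succ => Nat.pair 1 0
  | _, @PRCode.proj n i => Nat.pair 2 (Nat.pair n i.1)
  | _, .comp g h => Nat.pair 3 (Nat.pair g.enc (encList (List.ofFn fun i => (h i).enc)))
  | _, .prec g h => Nat.pair 4 (Nat.pair g.enc h.enc)

def Term.enc : Term Empty → ℕ
  | .var n => Nat.pair 0 n
  | .const c => c.elim
  | .func f ts => Nat.pair 1 (Nat.pair f.enc (encList (List.ofFn fun i => (ts i).enc)))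

/-- Gödel numbering `⌜φ⌝` of L-formulas. -/
def Formula.enc : Formula Empty → ℕ
  | .falsum => Nat.pair 0 0
  | .eq t u => Nat.pair 1 (Nat.pair t.enc u.enc)
  | .conj φ ψ => Nat.pair 2 (Nat.pair φ.enc ψ.enc)
  | .disj φ ψ => Nat.pair 3 (Nat.pair φ.enc ψ.enc)
  | .impl φ ψ => Nat.pair 4 (Nat.pair φ.enc ψ.enc)
  | .all φ => Nat.pair 5 φ.enc
  | .ex φ => Nat.pair 6 φ.enc

/-- The set of axioms is recursively enumerable. -/
def REset (T : Set (Formula Empty)) : Prop :=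
  REPred fun n => ∃ φ ∈ T, φ.enc = n

/-- The class `I` of reasonable intuitionistic arithmetical theories:
consistent, containing iPRA, with an r.e. set of axioms. -/
def InClassI (T : Set (Formula Empty)) : Prop :=
  IConsistent T ∧ iPRAax ⊆ T ∧ REset T

/-- Substitute numerals for the first `n` variables. -/
def substNums (n : ℕ) (a : Fin n → ℕ) (φ : Formula Empty) : Formula Empty :=
  φ.subst fun i => if h : i < n then numeral (a ⟨i, h⟩) else .var (i - n)

/-- Substitute constants of `M` for the first `n` variables. -/
def substConsts (M : Struc) (n : ℕ) (c : Fin n → M.carrier) (φ : Formula Empty) :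
    Formula M.carrier :=
  (ofL φ).subst fun i => if h : i < n then .const (c ⟨i, h⟩) else .var (i - n)

/-- `Pr_T(⌜φ⌝)` at a standard code. -/
def PrAtNum (PrT : Formula Empty) (m : ℕ) : Formula Empty := subst0 (numeral m) PrT

/-- `Con(T) := ¬Pr_T(⌜⊥⌝)`. -/
def ConSent (PrT : Formula Empty) : Formula Empty :=
  (PrAtNum PrT (Formula.falsum : Formula Empty).enc).neg

/-- `(PrT, gsub, fconj, fimp)` is a standard Σ₁ provability predicate for `T`
(obtained from a primitive recursive proof predicate): `gsub φ n` is the L-symbol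
for the primitive recursive function `ā ↦ ⌜φ(ā̇)⌝`, `fconj`/`fimp` arithmetize
conjunction/implication of codes, and the usual derivability conditions are
provable in PRA. -/
structure StdProv (T : Set (Formula Empty)) (PrT : Formula Empty)
    (gsub : Formula Empty → (n : ℕ) → PRCode n) (fconj fimp : PRCode 2) : Prop where
  fv : PrT.fvBelow 1
  sigma1 : IsSigma1 PrT
  sound : ∀ φ : Formula Empty, φ.IsClosed →
      (stdModel.ModelsL (PrAtNum PrT φ.enc) ↔ iProves T φ)
  complete : ∀ φ : Formula Empty, iProves T φ → PRAproves (PrAtNum PrT φ.enc)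
  gsub_spec : ∀ (φ : Formula Empty) (n : ℕ) (a : Fin n → ℕ),
      (gsub φ n).eval a = (substNums n a φ).enc
  fconj_spec : ∀ φ ψ : Formula Empty, fconj.eval ![φ.enc, ψ.enc] = (φ.conj ψ).enc
  fimp_spec : ∀ φ ψ : Formula Empty, fimp.eval ![φ.enc, ψ.enc] = (φ.impl ψ).enc
  pr_conj : PRAproves (closeN 2 (((subst0 (.var 1) PrT).conj (subst0 (.var 0) PrT)).impl
      (subst0 (.func fconj ![Term.var 1, Term.var 0]) PrT)))
  pr_mp : PRAproves (closeN 2 (((subst0 (.var 1) PrT).conj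
      (subst0 (.func fimp ![Term.var 1, Term.var 0]) PrT)).impl (subst0 (.var 0) PrT)))
  pr_inst : ∀ (φ : Formula Empty) (n : ℕ), φ.fvBelow n →
      PRAproves (closeN n ((subst0 (numeral (closeN n φ).enc) PrT).impl
        (subst0 (.func (gsub φ n) (varsF n)) PrT)))
  pr_gsub_conj : ∀ (φ ψ : Formula Empty) (n : ℕ),
      PRAproves (closeN n (.eq (.func (gsub (φ.conj ψ) n) (varsF n))
        (.func fconj ![Term.func (gsub φ n) (varsF n), Term.func (gsub ψ n) (varsF n)])))

/-- `EXT(M,T) = {φ ∈ Sent(L(M)) : M ⊨ Pr_T(⌜φ⌝)}` (where for a sentence with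
parameters the Gödel code is computed inside `M` via the substitution
function). -/
def EXTset (M : Struc) (PrT : Formula Empty)
    (gsub : Formula Empty → (n : ℕ) → PRCode n) : Set (Formula M.carrier) :=
  {χ | ∃ (φ : Formula Empty) (n : ℕ) (c : Fin n → M.carrier), φ.fvBelow n ∧
      χ = substConsts M n c φ ∧
      M.ModelsM (subst0 (.func (gsub φ n) fun i => .const (c i)) (ofL PrT))}

/-- `C_{M,T} := T + EXT(M,T)`. -/
def Ctheory (T : Set (Formula Empty)) (M : Struc) (PrT : Formula Empty)
    (gsub : Formula Empty → (n : ℕ) → PRCode n) : Set (Formula M.carrier) :=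
  (ofL '' T) ∪ EXTset M PrT gsub

/-- Specification of the Π₂ sentence `EP(T)` formalizing the existence property
of `T`: in any model, if `Pr_T(⌜∃x φ(x)⌝)` holds then `Pr_T(⌜φ(ȧ)⌝)` holds for
some element `a`. -/
def EPspec (PrT : Formula Empty) (gsub : Formula Empty → (n : ℕ) → PRCode n)
    (EPf : Formula Empty) : Prop :=
  IsPi2 EPf ∧ EPf.IsClosed ∧
    ∀ M : Struc, M.ModelsL EPf →
      ∀ φ : Formula Empty, φ.fvBelow 1 →
        M.ModelsL (PrAtNum PrT (Formula.ex φ).enc) →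
        ∃ a : M.carrier, Formula.Sat M (fun e => e.elim) (fun _ => a)
          (subst0 (.func (gsub φ 1) ![Term.var 0]) PrT)

/-! ### θ and `HA + ¬θ + MP` -/

/-- `H(x)`: the Turing machine with code `x` halts on input `x`, i.e.
`∃u T(x,x,u)`; here in the variable-convention of the `ψ`-slot of `ectInstance`
(the variable `x` is `1` outside the `∃`). -/
def haltF (tc : PRCode 3) : Formula Empty :=
  Formula.ex (.eq (.func tc ![Term.var 2, Term.var 2, Term.var 0]) zeroT)

/-- `ψ(x,y) := (y = 0 ∧ H(x)) ∨ (y ≠ 0 ∧ ¬H(x))`. -/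
def psi0 (tc : PRCode 3) : Formula Empty :=
  ((Formula.eq (.var 0) zeroT).conj (haltF tc)).disj
    (((Formula.eq (.var 0) zeroT).neg).conj (Formula.neg (haltF tc)))

/-- The sentence `θ`: the instance of ECT₀ with `φ(x) := ⊤` and
`ψ(x,y) := (y = 0 ∧ H(x)) ∨ (y ≠ 0 ∧ ¬H(x))`. -/
def thetaSent (tc : PRCode 3) (uc : PRCode 1) : Formula Empty :=
  ectInstance tc uc (Formula.impl .falsum .falsum) (psi0 tc)

/-- The theory `HA + ¬θ + MP`. -/
def HAMPtheory (tc : PRCode 3) (uc : PRCode 1) : Set (Formula Empty) :=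
  HAax ∪ {(thetaSent tc uc).neg} ∪ MPax

/-! ### Auxiliary development for Statement 13 -/

section Stage1

theorem Term.subst_subst (t : Term C) (σ τ : ℕ → Term C) :
    (t.subst σ).subst τ = t.subst (fun n => (σ n).subst τ) := by
  induction t with
  | var n => rfl
  | const c => rfl
  | func f ts ih => exact congrArg (Term.func f) (funext fun i => ih i)

theorem Term.shift_subst' (t : Term C) (τ : ℕ → Term C) :
    (t.subst τ).shift = (t.shift).subst (liftSubst τ) := by
  simp only [Term.shift, Term.subst_subst]; rfl

theorem liftSubst_comp (σ τ : ℕ → Term C) :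
    liftSubst (fun n => (σ n).subst τ) = fun n => (liftSubst σ n).subst (liftSubst τ) := by
  funext n
  cases n with
  | zero => rfl
  | succ n => exact Term.shift_subst' (σ n) τ

theorem Formula.subst_subst (φ : Formula C) (σ τ : ℕ → Term C) :
    (φ.subst σ).subst τ = φ.subst (fun n => (σ n).subst τ) := by
  induction φ generalizing σ τ with
  | falsum => rfl
  | eq t u => simp [Formula.subst, Term.subst_subst]
  | conj φ ψ ih1 ih2 => simp [Formula.subst, ih1, ih2]
  | disj φ ψ ih1 ih2 => simp [Formula.subst, ih1, ih2]
  | impl φ ψ ih1 ih2 => simp [Formula.subst, ih1, ih2]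
  | all φ ih => simp [Formula.subst, ih, liftSubst_comp]
  | ex φ ih => simp [Formula.subst, ih, liftSubst_comp]

theorem liftSubst_var : liftSubst (Term.var : ℕ → Term C) = Term.var := by
  funext n; cases n <;> rfl

theorem Term.subst_var (t : Term C) : t.subst Term.var = t := by
  induction t with
  | var n => rfl
  | const c => rfl
  | func f ts ih => exact congrArg (Term.func f) (funext fun i => ih i)

theorem Formula.subst_var (φ : Formula C) : φ.subst Term.var = φ := by
  induction φ with
  | falsum => rfl
  | eq t u => simp [Formula.subst, Term.subst_var]
  | conj φ ψ ih1 ih2 => simp [Formula.subst, ih1, ih2]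
  | disj φ ψ ih1 ih2 => simp [Formula.subst, ih1, ih2]
  | impl φ ψ ih1 ih2 => simp [Formula.subst, ih1, ih2]
  | all φ ih => simp [Formula.subst, liftSubst_var, ih]
  | ex φ ih => simp [Formula.subst, liftSubst_var, ih]

/-- The substitution function used by `subst0`. -/
def cons0 (t : Term C) : ℕ → Term C := fun n => match n with
  | 0 => t
  | m + 1 => .var m

theorem subst0_def (t : Term C) (φ : Formula C) : subst0 t φ = φ.subst (cons0 t) := rfl

theorem Term.shift_cons0 (t s : Term C) : (t.shift).subst (cons0 s) = t := by
  simp only [Term.shift, Term.subst_subst]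
  exact Term.subst_var t

theorem subst0_subst (t : Term C) (φ : Formula C) (σ : ℕ → Term C) :
    (subst0 t φ).subst σ = subst0 (t.subst σ) (φ.subst (liftSubst σ)) := by
  simp only [subst0_def, Formula.subst_subst]
  congr 1
  funext n
  cases n with
  | zero => rfl
  | succ n => exact (Term.shift_cons0 (σ n) (t.subst σ)).symm

theorem shiftF_subst (φ : Formula C) (σ : ℕ → Term C) :
    (φ.subst σ).shiftF = (φ.shiftF).subst (liftSubst σ) := by
  simp only [Formula.shiftF, Formula.subst_subst]; rfl

theorem Term.subst_congr_fv {t : Term C} {k : ℕ} {σ σ' : ℕ → Term C}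
    (h : t.fvBelow k) (hσ : ∀ i < k, σ i = σ' i) : t.subst σ = t.subst σ' := by
  induction t with
  | var n => exact hσ n h
  | const c => rfl
  | func f ts ih => exact congrArg (Term.func f) (funext fun i => ih i (h i))

theorem liftSubst_agree {k : ℕ} {σ σ' : ℕ → Term C} (hσ : ∀ i < k, σ i = σ' i) :
    ∀ i < k + 1, liftSubst σ i = liftSubst σ' i := by
  intro i hi
  cases i with
  | zero => rfl
  | succ i => exact congrArg Term.shift (hσ i (Nat.lt_of_succ_lt_succ hi))

theorem Formula.subst_congr_fv {φ : Formula C} {k : ℕ} {σ σ' : ℕ → Term C}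
    (h : φ.fvBelow k) (hσ : ∀ i < k, σ i = σ' i) : φ.subst σ = φ.subst σ' := by
  induction φ generalizing k σ σ' with
  | falsum => rfl
  | eq t u => simp [Formula.subst,
      Term.subst_congr_fv h.1 hσ, Term.subst_congr_fv h.2 hσ]
  | conj φ ψ ih1 ih2 => simp [Formula.subst, ih1 h.1 hσ, ih2 h.2 hσ]
  | disj φ ψ ih1 ih2 => simp [Formula.subst, ih1 h.1 hσ, ih2 h.2 hσ]
  | impl φ ψ ih1 ih2 => simp [Formula.subst, ih1 h.1 hσ, ih2 h.2 hσ]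
  | all φ ih => simp [Formula.subst, ih h (liftSubst_agree hσ)]
  | ex φ ih => simp [Formula.subst, ih h (liftSubst_agree hσ)]

theorem Formula.subst_fv_id {φ : Formula C} {k : ℕ} {σ : ℕ → Term C}
    (h : φ.fvBelow k) (hσ : ∀ i < k, σ i = .var i) : φ.subst σ = φ := by
  rw [Formula.subst_congr_fv h hσ]; exact Formula.subst_var φ

theorem Formula.subst_closed {φ : Formula C} (h : φ.IsClosed) (σ : ℕ → Term C) :
    φ.subst σ = φ :=
  Formula.subst_fv_id h (fun i hi => absurd hi (Nat.not_lt_zero i))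

theorem numeral_subst (m : ℕ) (σ : ℕ → Term C) : (numeral m).subst σ = numeral m := by
  induction m with
  | zero => exact congrArg (Term.func .zero) (funext fun i => i.elim0)
  | succ m ih => exact congrArg (Term.func .succ) (funext fun _ => ih)

end Stage1

section Stage2

variable {cl : Prop}

theorem Derives.weaken {Γ Δ : Set (Formula C)} {φ : Formula C}
    (d : Derives cl Γ φ) (hsub : Γ ⊆ Δ) : Derives cl Δ φ := by
  induction d generalizing Δ with
  | hyp h => exact .hyp (hsub h)
  | implI _ ih => exact .implI (ih (Set.insert_subset_insert hsub))
  | implE _ _ ih1 ih2 => exact .implE (ih1 hsub) (ih2 hsub)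
  | conjI _ _ ih1 ih2 => exact .conjI (ih1 hsub) (ih2 hsub)
  | conjE1 _ ih => exact .conjE1 (ih hsub)
  | conjE2 _ ih => exact .conjE2 (ih hsub)
  | disjI1 _ ih => exact .disjI1 (ih hsub)
  | disjI2 _ ih => exact .disjI2 (ih hsub)
  | disjE _ _ _ ih1 ih2 ih3 =>
      exact .disjE (ih1 hsub) (ih2 (Set.insert_subset_insert hsub))
        (ih3 (Set.insert_subset_insert hsub))
  | falsumE _ ih => exact .falsumE (ih hsub)
  | allI _ ih => exact .allI (ih (Set.image_mono hsub))
  | allE t _ ih => exact .allE t (ih hsub)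
  | exI t _ ih => exact .exI t (ih hsub)
  | exE _ _ ih1 ih2 =>
      exact .exE (ih1 hsub)
        (ih2 (Set.insert_subset_insert (Set.image_mono hsub)))
  | eqRefl t => exact .eqRefl t
  | eqSubst t u _ _ ih1 ih2 => exact .eqSubst t u (ih1 hsub) (ih2 hsub)
  | dne hcl _ ih => exact .dne hcl (ih hsub)

theorem Derives.substD {Γ : Set (Formula C)} {φ : Formula C}
    (d : Derives cl Γ φ) (σ : ℕ → Term C) :
    Derives cl ((fun ψ => Formula.subst σ ψ) '' Γ) (φ.subst σ) := by
  induction d generalizing σ with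
  | hyp h => exact .hyp ⟨_, h, rfl⟩
  | @implI Γ φ ψ _ ih =>
      refine .implI ?_
      have := ih σ
      rwa [Set.image_insert_eq] at this
  | implE _ _ ih1 ih2 => exact .implE (ih1 σ) (ih2 σ)
  | conjI _ _ ih1 ih2 => exact .conjI (ih1 σ) (ih2 σ)
  | conjE1 _ ih => exact .conjE1 (ih σ)
  | conjE2 _ ih => exact .conjE2 (ih σ)
  | disjI1 _ ih => exact .disjI1 (ih σ)
  | disjI2 _ ih => exact .disjI2 (ih σ)
  | disjE _ _ _ ih1 ih2 ih3 =>
      refine .disjE (ih1 σ) ?_ ?_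
      · have := ih2 σ; rwa [Set.image_insert_eq] at this
      · have := ih3 σ; rwa [Set.image_insert_eq] at this
  | falsumE _ ih => exact .falsumE (ih σ)
  | @allI Γ φ _ ih =>
      refine .allI ?_
      have := ih (liftSubst σ)
      have himg : (fun ψ => Formula.subst (liftSubst σ) ψ) '' (Formula.shiftF '' Γ) =
          Formula.shiftF '' ((fun ψ => Formula.subst σ ψ) '' Γ) := by
        rw [Set.image_image, Set.image_image]
        exact Set.image_congr' (fun ψ => (shiftF_subst ψ σ).symm)
      rwa [himg] at this
  | @allE Γ φ t _ ih =>
      have := Derives.allE (t.subst σ) (ih σ)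
      rwa [← subst0_subst] at this
  | @exI Γ φ t _ ih =>
      refine .exI (t.subst σ) ?_
      have := ih σ
      rwa [subst0_subst] at this
  | @exE Γ φ χ _ _ ih1 ih2 =>
      refine .exE (ih1 σ) ?_
      have := ih2 (liftSubst σ)
      have himg : (fun ψ => Formula.subst (liftSubst σ) ψ) ''
            (insert φ (Formula.shiftF '' Γ)) =
          insert (φ.subst (liftSubst σ))
            (Formula.shiftF '' ((fun ψ => Formula.subst σ ψ) '' Γ)) := by
        rw [Set.image_insert_eq]
        congr 1
        rw [Set.image_image, Set.image_image]
        exact Set.image_congr' (fun ψ => (shiftF_subst ψ σ).symm)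
      rw [himg, ← shiftF_subst] at this
      exact this
  | eqRefl t => exact .eqRefl (t.subst σ)
  | @eqSubst Γ φ t u _ _ ih1 ih2 =>
      have h1 := ih1 σ
      have h2 := ih2 σ
      rw [subst0_subst] at h2
      have := Derives.eqSubst (Γ := (fun ψ => Formula.subst σ ψ) '' Γ)
        (φ := φ.subst (liftSubst σ)) (t.subst σ) (u.subst σ) h1 h2
      rwa [← subst0_subst] at this
  | dne hcl _ ih => exact .dne hcl (ih σ)

theorem Derives.shiftD {Γ : Set (Formula C)} {φ : Formula C}
    (d : Derives cl Γ φ) : Derives cl (Formula.shiftF '' Γ) φ.shiftF :=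
  d.substD _

theorem Derives.cut {Δ : Set (Formula C)} {χ : Formula C}
    (d : Derives cl Δ χ) :
    ∀ {Γ : Set (Formula C)}, (∀ δ ∈ Δ, Derives cl Γ δ) → Derives cl Γ χ := by
  induction d with
  | hyp h => exact fun hΓ => hΓ _ h
  | @implI Δ φ ψ _ ih =>
      intro Γ hΓ
      refine .implI (ih ?_)
      rintro δ (rfl | hδ)
      · exact .hyp (Set.mem_insert _ _)
      · exact (hΓ δ hδ).weaken (Set.subset_insert _ _)
  | implE _ _ ih1 ih2 => exact fun hΓ => .implE (ih1 hΓ) (ih2 hΓ)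
  | conjI _ _ ih1 ih2 => exact fun hΓ => .conjI (ih1 hΓ) (ih2 hΓ)
  | conjE1 _ ih => exact fun hΓ => .conjE1 (ih hΓ)
  | conjE2 _ ih => exact fun hΓ => .conjE2 (ih hΓ)
  | disjI1 _ ih => exact fun hΓ => .disjI1 (ih hΓ)
  | disjI2 _ ih => exact fun hΓ => .disjI2 (ih hΓ)
  | disjE _ _ _ ih1 ih2 ih3 =>
      intro Γ hΓ
      refine .disjE (ih1 hΓ) (ih2 ?_) (ih3 ?_) <;>
      · rintro δ (rfl | hδ)
        · exact .hyp (Set.mem_insert _ _)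
        · exact (hΓ δ hδ).weaken (Set.subset_insert _ _)
  | falsumE _ ih => exact fun hΓ => .falsumE (ih hΓ)
  | allI _ ih =>
      intro Γ hΓ
      refine .allI (ih ?_)
      rintro δ ⟨δ₀, hδ₀, rfl⟩
      exact (hΓ δ₀ hδ₀).shiftD.weaken (le_refl _)
  | allE t _ ih => exact fun hΓ => .allE t (ih hΓ)
  | exI t _ ih => exact fun hΓ => .exI t (ih hΓ)
  | exE _ _ ih1 ih2 =>
      intro Γ hΓ
      refine .exE (ih1 hΓ) (ih2 ?_)
      rintro δ (rfl | ⟨δ₀, hδ₀, rfl⟩)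
      · exact .hyp (Set.mem_insert _ _)
      · exact (hΓ δ₀ hδ₀).shiftD.weaken (Set.subset_insert _ _)
  | eqRefl t => exact fun _ => .eqRefl t
  | eqSubst t u _ _ ih1 ih2 => exact fun hΓ => .eqSubst t u (ih1 hΓ) (ih2 hΓ)
  | dne hcl _ ih => exact fun hΓ => .dne hcl (ih hΓ)

end Stage2

section Stage3

variable {cl : Prop} {S : Struc} {cI : C → S.carrier}

theorem Term.val_subst (t : Term C) (σ : ℕ → Term C) (v : ℕ → S.carrier) :
    (t.subst σ).val S cI v = t.val S cI (fun n => (σ n).val S cI v) := by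
  induction t with
  | var n => rfl
  | const c => rfl
  | func f ts ih => exact congrArg (S.interp f) (funext fun i => ih i)

theorem liftSubst_val (σ : ℕ → Term C) (v : ℕ → S.carrier) (a : S.carrier) :
    (fun n => (liftSubst σ n).val S cI (vcons a v)) =
      vcons a (fun n => (σ n).val S cI v) := by
  funext n
  cases n with
  | zero => rfl
  | succ n =>
      show ((σ n).shift).val S cI (vcons a v) = (σ n).val S cI v
      rw [Term.shift, Term.val_subst]
      rfl

theorem Formula.Sat_subst (φ : Formula C) (σ : ℕ → Term C) (v : ℕ → S.carrier) :
    (φ.subst σ).Sat S cI v ↔ φ.Sat S cI (fun n => (σ n).val S cI v) := by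
  induction φ generalizing σ v with
  | falsum => exact Iff.rfl
  | eq t u => simp [Formula.subst, Formula.Sat, Term.val_subst]
  | conj _ _ ih1 ih2 => simp [Formula.subst, Formula.Sat, ih1, ih2]
  | disj _ _ ih1 ih2 => simp [Formula.subst, Formula.Sat, ih1, ih2]
  | impl _ _ ih1 ih2 => simp [Formula.subst, Formula.Sat, ih1, ih2]
  | all φ ih =>
      simp only [Formula.subst, Formula.Sat]
      refine forall_congr' fun a => ?_
      rw [ih, liftSubst_val]
  | ex φ ih =>
      simp only [Formula.subst, Formula.Sat]
      refine exists_congr fun a => ?_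
      rw [ih, liftSubst_val]

theorem subst0_val (t : Term C) (φ : Formula C) (v : ℕ → S.carrier) :
    (subst0 t φ).Sat S cI v ↔ φ.Sat S cI (vcons (t.val S cI v) v) := by
  rw [subst0_def, Formula.Sat_subst]
  have : (fun n => (cons0 t n).val S cI v) = vcons (t.val S cI v) v := by
    funext n; cases n <;> rfl
  rw [this]

theorem shiftF_val (φ : Formula C) (v : ℕ → S.carrier) (a : S.carrier) :
    (φ.shiftF).Sat S cI (vcons a v) ↔ φ.Sat S cI v := by
  rw [Formula.shiftF, Formula.Sat_subst]
  exact Iff.rfl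

theorem Derives.sound {Γ : Set (Formula C)} {φ : Formula C} (d : Derives cl Γ φ) :
    ∀ v : ℕ → S.carrier, (∀ γ ∈ Γ, γ.Sat S cI v) → φ.Sat S cI v := by
  induction d with
  | hyp h => exact fun v hv => hv _ h
  | implI _ ih =>
      intro v hv hφ
      refine ih v ?_
      rintro γ (rfl | hγ)
      · exact hφ
      · exact hv γ hγ
  | implE _ _ ih1 ih2 => exact fun v hv => (ih1 v hv) (ih2 v hv)
  | conjI _ _ ih1 ih2 => exact fun v hv => ⟨ih1 v hv, ih2 v hv⟩
  | conjE1 _ ih => exact fun v hv => (ih v hv).1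
  | conjE2 _ ih => exact fun v hv => (ih v hv).2
  | disjI1 _ ih => exact fun v hv => Or.inl (ih v hv)
  | disjI2 _ ih => exact fun v hv => Or.inr (ih v hv)
  | disjE _ _ _ ih1 ih2 ih3 =>
      intro v hv
      rcases ih1 v hv with h | h
      · refine ih2 v ?_
        rintro γ (rfl | hγ)
        · exact h
        · exact hv γ hγ
      · refine ih3 v ?_
        rintro γ (rfl | hγ)
        · exact h
        · exact hv γ hγ
  | falsumE _ ih => exact fun v hv => (ih v hv).elim
  | allI _ ih =>
      intro v hv a
      refine ih (vcons a v) ?_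
      rintro γ ⟨γ₀, h₀, rfl⟩
      exact (shiftF_val γ₀ v a).mpr (hv γ₀ h₀)
  | @allE Γ φ t _ ih =>
      intro v hv
      rw [subst0_val]
      exact ih v hv _ 
  | @exI Γ φ t _ ih =>
      intro v hv
      exact ⟨t.val S cI v, (subst0_val t φ v).mp (ih v hv)⟩
  | @exE Γ φ χ _ _ ih1 ih2 =>
      intro v hv
      obtain ⟨a, ha⟩ := ih1 v hv
      have := ih2 (vcons a v) ?_
      · rwa [shiftF_val] at this
      · rintro γ (rfl | ⟨γ₀, h₀, rfl⟩)
        · exact ha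
        · exact (shiftF_val γ₀ v a).mpr (hv γ₀ h₀)
  | eqRefl t => exact fun v hv => rfl
  | @eqSubst Γ φ t u _ _ ih1 ih2 =>
      intro v hv
      have heq : t.val S cI v = u.val S cI v := ih1 v hv
      have h2 := (subst0_val t φ v).mp (ih2 v hv)
      rw [subst0_val, ← heq]
      exact h2
  | dne hcl _ ih =>
      intro v hv
      exact Classical.byContradiction fun hn => ih v hv (fun h => hn h)

end Stage3

section Stage4

theorem numeral_val {cI : C → ℕ} (m : ℕ) (v : ℕ → ℕ) :
    (numeral m).val stdModel cI v = m := by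
  induction m with
  | zero => rfl
  | succ m ih => exact congrArg (fun x : ℕ => x + 1) ih

theorem Sat_closeN_of {S : Struc} {cI : C → S.carrier} {φ : Formula C}
    (h : ∀ v, φ.Sat S cI v) : ∀ (k : ℕ) (v : ℕ → S.carrier), (closeN k φ).Sat S cI v := by
  intro k
  induction k generalizing φ h with
  | zero => exact h
  | succ k ih =>
      intro v
      exact ih (φ := .all φ) (fun v' a => h (vcons a v')) v

theorem prec_eval_cons {n : ℕ} (g : PRCode n) (h : PRCode (n + 2)) (a : ℕ) (r : Fin n → ℕ) :
    (PRCode.prec g h).eval (Fin.cons a r) =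
      Nat.rec (motive := fun _ => ℕ) (g.eval r)
        (fun y ih => h.eval (Fin.cons y (Fin.cons ih r))) a := by
  simp only [PRCode.eval, Fin.cons_zero, Fin.cons_succ]

theorem std_sat_QAx {γ : Formula Empty} (hγ : γ ∈ QAx) (v : ℕ → ℕ) :
    γ.Sat stdModel (fun e => e.elim) v := by
  rcases hγ with rfl | rfl | rfl
  · exact fun a h => Nat.succ_ne_zero _ h
  · exact fun a b h => Nat.succ_injective h
  · intro a
    cases a with
    | zero => exact Or.inl rfl
    | succ n => exact Or.inr ⟨n, rfl⟩

theorem val_func {S : Struc} {cI : C → S.carrier} {n : ℕ} (f : PRCode n)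
    (ts : Fin n → Term C) (v : ℕ → S.carrier) :
    Term.val S cI v (.func f ts) = S.interp f (fun i => Term.val S cI v (ts i)) := rfl

theorem std_interp {n : ℕ} (f : PRCode n) (vv : Fin n → ℕ) :
    stdModel.interp f vv = f.eval vv := rfl

theorem val_cons {S : Struc} {cI : C → S.carrier} {n : ℕ} (x : Term C) (p : Fin n → Term C)
    (v : ℕ → S.carrier) :
    (fun i : Fin (n + 1) => Term.val S cI v (Fin.cons (α := fun _ => Term C) x p i)) =
      Fin.cons (Term.val S cI v x) (fun i => Term.val S cI v (p i)) := by
  funext i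
  refine Fin.cases ?_ (fun j => ?_) i
  · simp [Fin.cons_zero]
  · simp [Fin.cons_succ]

theorem std_sat_prDefAx {γ : Formula Empty} (hγ : γ ∈ prDefAx) (v : ℕ → ℕ) :
    γ.Sat stdModel (fun e => e.elim) v := by
  obtain ⟨n, c, hmem⟩ := hγ
  cases c with
  | zero => simp [PRCode.defAx] at hmem
  | succ => simp [PRCode.defAx] at hmem
  | @proj n i =>
      simp only [PRCode.defAx, List.mem_singleton] at hmem
      subst hmem
      apply Sat_closeN_of
      intro v'
      exact rfl
  | @comp m n g h =>
      simp only [PRCode.defAx, List.mem_singleton] at hmem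
      subst hmem
      apply Sat_closeN_of
      intro v'
      exact rfl
  | @prec n g h =>
      simp only [PRCode.defAx, List.mem_cons, List.not_mem_nil, or_false] at hmem
      rcases hmem with rfl | rfl
      · apply Sat_closeN_of
        intro v'
        show Term.val stdModel (fun e : Empty => e.elim) v'
            (.func (.prec g h) (Fin.cons zeroT (varsF n))) =
          Term.val stdModel (fun e : Empty => e.elim) v' (.func g (varsF n))
        simp only [val_func, std_interp, val_cons, prec_eval_cons]
        rfl
      · apply Sat_closeN_of
        intro v'
        show Term.val stdModel (fun e : Empty => e.elim) v'
            (.func (.prec g h)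
              (Fin.cons (succT (.var 0)) fun i : Fin n => .var (i.1 + 1))) =
          Term.val stdModel (fun e : Empty => e.elim) v'
            (.func h (Fin.cons (.var 0) (Fin.cons
              (.func (.prec g h) (Fin.cons (.var 0) fun i : Fin n => .var (i.1 + 1)))
              fun i : Fin n => .var (i.1 + 1))))
        simp only [val_func, std_interp, val_cons, prec_eval_cons]
        rfl

theorem std_succSubst_sat (φ : Formula Empty) (a : ℕ) (v : ℕ → ℕ) :
    (φ.subst fun n => match n with
      | 0 => succT (.var 0)
      | m + 1 => Term.var (m + 1)).Sat stdModel (fun e => e.elim) (vcons a v) ↔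
    φ.Sat stdModel (fun e => e.elim) (vcons (a + 1) v) := by
  rw [Formula.Sat_subst]
  have henv : (fun n => Term.val stdModel (fun e : Empty => e.elim) (vcons a v)
      ((fun n => match n with
        | 0 => succT (.var 0)
        | m + 1 => (Term.var (m + 1) : Term Empty)) n)) = vcons (a + 1) v := by
    funext n; cases n <;> rfl
  exact iff_of_eq (congrArg (fun w => Formula.Sat stdModel (fun e : Empty => e.elim) w φ) henv)

theorem std_sat_ind {φ : Formula Empty} (k : ℕ) (v : ℕ → ℕ) :
    (closeN k (indBody φ)).Sat stdModel (fun e => e.elim) v := by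
  apply Sat_closeN_of
  intro v'
  rintro ⟨hbase, hstep⟩ a
  induction a with
  | zero => exact (subst0_val (cI := fun e : Empty => e.elim) zeroT φ v').mp hbase
  | succ a ih => exact (std_succSubst_sat φ a v').mp (hstep a ih)

theorem std_sat_MP {γ : Formula Empty} (hγ : γ ∈ MPax) (v : ℕ → ℕ) :
    γ.Sat stdModel (fun e => e.elim) v := by
  obtain ⟨φ, k, rfl⟩ := hγ
  apply Sat_closeN_of
  intro v'
  rintro ⟨-, hnn⟩
  exact Classical.not_not.mp hnn

/-- The "diagonal halting" predicate expressed with `tc`. -/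
def SemH (tc : PRCode 3) (x : ℕ) : Prop := ∃ u, tc.eval ![x, x, u] = 0

theorem semH_iff {tc : PRCode 3} {uc : PRCode 1} (hTU : KleeneTU tc uc) (x : ℕ) :
    SemH tc x ↔ (Nat.Partrec.Code.eval (Denumerable.ofNat Nat.Partrec.Code x) x).Dom := by
  constructor
  · rintro ⟨u, hu⟩
    have hT := (hTU.1 x x u).mp hu
    have hm : u.unpair.2 ∈ Nat.Partrec.Code.evaln u.unpair.1
        (Denumerable.ofNat Nat.Partrec.Code x) x := hT
    exact Part.dom_iff_mem.mpr ⟨_, Nat.Partrec.Code.evaln_sound hm⟩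
  · intro hdom
    obtain ⟨a, ha⟩ := Part.dom_iff_mem.mp hdom
    obtain ⟨k, hk⟩ := Nat.Partrec.Code.evaln_complete.mp ha
    refine ⟨Nat.pair k a, (hTU.1 x x _).mpr ?_⟩
    unfold KleeneT
    rw [Nat.unpair_pair]
    exact hk

theorem no_decider (tc : PRCode 3) (uc : PRCode 1) (hTU : KleeneTU tc uc) :
    ¬ ∃ z, ∀ x, ∃ u, tc.eval ![z, x, u] = 0 ∧
      ((uc.eval ![u] = 0 ∧ SemH tc x) ∨ (¬ uc.eval ![u] = 0 ∧ ¬ SemH tc x)) := by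
  rintro ⟨z, hz⟩
  set cz := Denumerable.ofNat Nat.Partrec.Code z with hcz
  have hev : ∀ x, ∃ a, a ∈ Nat.Partrec.Code.eval cz x ∧
      ((a = 0 ∧ SemH tc x) ∨ (a ≠ 0 ∧ ¬ SemH tc x)) := by
    intro x
    obtain ⟨u, hu, hcase⟩ := hz x
    have hT := (hTU.1 z x u).mp hu
    have hm : u.unpair.2 ∈ Nat.Partrec.Code.evaln u.unpair.1 cz x := hT
    rw [hTU.2 u] at hcase
    exact ⟨u.unpair.2, Nat.Partrec.Code.evaln_sound hm, hcase⟩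
  -- the function deciding the halting problem, as a partial recursive function
  have hpz : Nat.Partrec (Nat.Partrec.Code.eval cz) :=
    Nat.Partrec.Code.exists_code.mpr ⟨cz, rfl⟩
  have hinner : Partrec₂ (fun (_ a : ℕ) => if a = 0 then (Part.none : Part ℕ)
      else Part.some 0) := by
    have hc : Computable fun p : ℕ × ℕ => decide (p.2 = 0) :=
      (Primrec.eq.comp Primrec.snd (Primrec.const 0)).decide.to_comp
    have hnone : Partrec fun _ : ℕ × ℕ => (Part.none : Part ℕ) := Partrec.none
    have hsome : Partrec fun _ : ℕ × ℕ => (Part.some (0 : ℕ)) :=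
      (Computable.const (0 : ℕ)).partrec
    have := Partrec.cond hc hnone hsome
    refine this.of_eq fun p => ?_
    by_cases h : p.2 = 0 <;> simp [h]
  have hg : Nat.Partrec fun x => (Nat.Partrec.Code.eval cz x).bind
      (fun a => if a = 0 then (Part.none : Part ℕ) else Part.some 0) :=
    Partrec.nat_iff.1 ((Partrec.nat_iff.2 hpz).bind hinner)
  obtain ⟨c, hc⟩ := Nat.Partrec.Code.exists_code.mp hg
  set x := Encodable.encode c with hx
  have hcx : Denumerable.ofNat Nat.Partrec.Code x = c := Denumerable.ofNat_encode c
  obtain ⟨a, ha, hcase⟩ := hev x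
  have hKiff : SemH tc x ↔ (Nat.Partrec.Code.eval c x).Dom := by
    rw [semH_iff hTU, hcx]
  rcases hcase with ⟨h0, hK⟩ | ⟨h0, hK⟩
  · -- decider says halt, but then eval c x diverges
    have hdom : (Nat.Partrec.Code.eval c x).Dom := hKiff.mp hK
    rw [hc] at hdom
    obtain ⟨b, hb⟩ := Part.dom_iff_mem.mp hdom
    rw [Part.mem_bind_iff] at hb
    obtain ⟨a', ha', hb'⟩ := hb
    have : a' = a := Part.mem_unique ha' ha
    subst this
    rw [if_pos h0] at hb'
    exact Part.notMem_none b hb'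
  · -- decider says diverge, but then eval c x converges
    refine hK (hKiff.mpr ?_)
    rw [hc]
    refine Part.dom_iff_mem.mpr ⟨0, Part.mem_bind_iff.mpr ⟨a, ha, ?_⟩⟩
    rw [if_neg h0]
    exact Part.mem_some 0

theorem val_tcapp (tc : PRCode 3) (w : ℕ → ℕ) (i j k : ℕ) :
    Term.val stdModel (fun e : Empty => e.elim) w
      (.func tc ![Term.var i, Term.var j, Term.var k]) = tc.eval ![w i, w j, w k] := by
  erw [val_func, std_interp]
  congr 1
  funext ℓ
  fin_cases ℓ <;> rfl

theorem val_ucapp (uc : PRCode 1) (w : ℕ → ℕ) (i : ℕ) :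
    Term.val stdModel (fun e : Empty => e.elim) w (.func uc ![Term.var i]) =
      uc.eval ![w i] := by
  erw [val_func, std_interp]
  congr 1
  funext ℓ
  fin_cases ℓ <;> rfl

theorem sat_haltF (tc : PRCode 3) (w : ℕ → ℕ) :
    Formula.Sat stdModel (fun e : Empty => e.elim) w (haltF tc) ↔ SemH tc (w 1) := by
  refine exists_congr fun u => ?_
  show Term.val stdModel (fun e : Empty => e.elim) (vcons u w)
      (.func tc ![Term.var 2, Term.var 2, Term.var 0]) =
    Term.val stdModel (fun e : Empty => e.elim) (vcons u w) zeroT ↔ _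
  erw [val_tcapp]
  exact Iff.rfl

theorem std_sat_negTheta (tc : PRCode 3) (uc : PRCode 1) (hTU : KleeneTU tc uc)
    (v : ℕ → ℕ) : ((thetaSent tc uc).neg).Sat stdModel (fun e => e.elim) v := by
  intro hθ
  have hyp : ∀ a, Formula.Sat stdModel (fun e : Empty => e.elim) (vcons a v)
      ((Formula.impl .falsum .falsum).impl (.ex (psi0 tc))) := by
    intro a _
    by_cases hH : SemH tc a
    · exact ⟨(0 : ℕ), Or.inl ⟨rfl, (sat_haltF tc (vcons 0 (vcons a v))).mpr hH⟩⟩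
    · refine ⟨(1 : ℕ), Or.inr ⟨fun h => Nat.one_ne_zero h, fun h => ?_⟩⟩
      exact hH ((sat_haltF tc (vcons 1 (vcons a v))).mp h)
  obtain ⟨z, hz⟩ := hθ hyp
  refine no_decider tc uc hTU ⟨z, fun x => ?_⟩
  obtain ⟨u, h1, h2⟩ := hz x (fun h => h)
  refine ⟨u, ?_, ?_⟩
  · have h1' : Term.val stdModel (fun e : Empty => e.elim)
        (vcons u (vcons x (vcons z v)))
        (.func tc ![Term.var 2, Term.var 1, Term.var 0]) =
        Term.val stdModel (fun e : Empty => e.elim)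
          (vcons u (vcons x (vcons z v))) zeroT := h1
    erw [val_tcapp] at h1'
    exact h1'
  · rw [Formula.Sat_subst] at h2
    rcases h2 with ⟨h0, hh⟩ | ⟨h0, hh⟩
    · refine Or.inl ⟨?_, ?_⟩
      · have h0' : Term.val stdModel (fun e : Empty => e.elim)
            (vcons u (vcons x (vcons z v))) (.func uc ![Term.var 0]) = (0 : ℕ) := h0
        erw [val_ucapp] at h0'
        exact h0'
      · exact (sat_haltF tc _).mp hh
    · refine Or.inr ⟨fun hq => ?_, fun hS => ?_⟩
      · refine h0 ?_
        show Term.val stdModel (fun e : Empty => e.elim)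
            (vcons u (vcons x (vcons z v))) (.func uc ![Term.var 0]) = (0 : ℕ)
        erw [val_ucapp]
        exact hq
      · exact hh ((sat_haltF tc _).mpr hS)

theorem std_models_HAMP (tc : PRCode 3) (uc : PRCode 1) (hTU : KleeneTU tc uc) :
    ∀ γ ∈ HAMPtheory tc uc, ∀ v : ℕ → ℕ, γ.Sat stdModel (fun e => e.elim) v := by
  rintro γ ((hγ | hγ) | hγ) v
  · rcases hγ with (hγ | hγ) | hγ
    · exact std_sat_QAx hγ v
    · exact std_sat_prDefAx hγ v
    · obtain ⟨φ, k, rfl⟩ := hγ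
      exact std_sat_ind k v
  · rcases hγ with rfl
    exact std_sat_negTheta tc uc hTU v
  · exact std_sat_MP hγ v

/-- ℕ-soundness of `HA + ¬θ + MP`. -/
theorem HAMP_sound {tc : PRCode 3} {uc : PRCode 1} (hTU : KleeneTU tc uc)
    {φ : Formula Empty} (h : iProves (HAMPtheory tc uc) φ) :
    ∀ v : ℕ → ℕ, φ.Sat stdModel (fun e => e.elim) v :=
  fun v => Derives.sound (S := stdModel) (cI := fun e : Empty => e.elim) h v
    (fun γ hγ => std_models_HAMP tc uc hTU γ hγ v)

theorem HAMP_consistent {tc : PRCode 3} {uc : PRCode 1} (hTU : KleeneTU tc uc) :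
    IConsistent (HAMPtheory tc uc) :=
  fun h => HAMP_sound hTU h (fun _ => (0 : ℕ))

end Stage4

section Stage5

variable {cl : Prop} {Γ : Set (Formula C)}

/-- Substituting numerals given by an environment. -/
def nsub (v : ℕ → ℕ) : ℕ → Term C := fun n => numeral (v n)

/-- Substitution-invariant terms (e.g. closed terms built from numerals). -/
def TInv (t : Term C) : Prop := ∀ σ : ℕ → Term C, t.subst σ = t

theorem TInv_numeral (m : ℕ) : TInv (numeral m : Term C) := fun σ => numeral_subst m σ

theorem TInv_func {n : ℕ} {f : PRCode n} {ts : Fin n → Term C}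
    (h : ∀ i, TInv (ts i)) : TInv (.func f ts) := fun σ =>
  congrArg (Term.func f) (funext fun i => h i σ)

theorem TInv_nsub (t : Term C) (v : ℕ → ℕ) : TInv (t.subst (nsub v)) := by
  intro σ
  rw [Term.subst_subst]
  exact congrArg t.subst (funext fun n => numeral_subst (v n) σ)

theorem dEq_symm {t u : Term C} (h : Derives cl Γ (.eq t u)) :
    Derives cl Γ (.eq u t) := by
  have h0 : subst0 t (Formula.eq (.var 0) t.shift) = .eq t t := by
    show Formula.eq ((Term.var 0).subst (cons0 t)) (t.shift.subst (cons0 t)) = _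
    rw [Term.shift_cons0]
    rfl
  have h1 : subst0 u (Formula.eq (.var 0) t.shift) = .eq u t := by
    show Formula.eq ((Term.var 0).subst (cons0 u)) (t.shift.subst (cons0 u)) = _
    rw [Term.shift_cons0]
    rfl
  have := Derives.eqSubst (φ := .eq (.var 0) t.shift) t u h (h0 ▸ Derives.eqRefl t)
  rwa [h1] at this

theorem dEq_trans {a b c : Term C} (h1 : Derives cl Γ (.eq a b))
    (h2 : Derives cl Γ (.eq b c)) : Derives cl Γ (.eq a c) := by
  have hb : subst0 b (Formula.eq a.shift (.var 0)) = .eq a b := by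
    show Formula.eq (a.shift.subst (cons0 b)) ((Term.var 0).subst (cons0 b)) = _
    rw [Term.shift_cons0]
    rfl
  have hc : subst0 c (Formula.eq a.shift (.var 0)) = .eq a c := by
    show Formula.eq (a.shift.subst (cons0 c)) ((Term.var 0).subst (cons0 c)) = _
    rw [Term.shift_cons0]
    rfl
  have := Derives.eqSubst (φ := .eq a.shift (.var 0)) b c h2 (hb ▸ h1)
  rwa [hc] at this

theorem dEq_update {n : ℕ} {f : PRCode n} {ts : Fin n → Term C} {s u : Term C}
    (hts : ∀ j, TInv (ts j)) (hs : TInv s) (hu : TInv u) (i : Fin n)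
    (h : Derives cl Γ (.eq s u)) :
    Derives cl Γ (.eq (.func f (Function.update ts i s))
      (.func f (Function.update ts i u))) := by
  have key : ∀ w : Term C, TInv w →
      subst0 w (Formula.eq (.func f (Function.update ts i (.var 0)))
          (.func f (Function.update ts i s))) =
        .eq (.func f (Function.update ts i w)) (.func f (Function.update ts i s)) := by
    intro w hw
    show Formula.eq (.func f fun j => (Function.update ts i (.var 0) j).subst (cons0 w))
        (.func f fun j => (Function.update ts i s j).subst (cons0 w)) = _
    congr 1
    · congr 1
      funext j
      rcases eq_or_ne j i with rfl | hne
      · rw [Function.update_self, Function.update_self]; rfl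
      · rw [Function.update_of_ne hne, Function.update_of_ne hne]; exact hts j _
    · congr 1
      funext j
      rcases eq_or_ne j i with rfl | hne
      · rw [Function.update_self]; exact hs _
      · rw [Function.update_of_ne hne]; exact hts j _
  have h1 := Derives.eqSubst
    (φ := .eq (.func f (Function.update ts i (.var 0))) (.func f (Function.update ts i s)))
    s u h (by rw [key s hs]; exact Derives.eqRefl _)
  rw [key u hu] at h1
  exact dEq_symm h1

theorem dEq_congr {n : ℕ} {f : PRCode n} {ts us : Fin n → Term C}
    (hts : ∀ j, TInv (ts j)) (hus : ∀ j, TInv (us j))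
    (h : ∀ j, Derives cl Γ (.eq (ts j) (us j))) :
    Derives cl Γ (.eq (.func f ts) (.func f us)) := by
  suffices H : ∀ k : ℕ, k ≤ n →
      Derives cl Γ (.eq (.func f ts) (.func f (fun j => if j.1 < k then us j else ts j))) by
    have h1 := H n (le_refl n)
    have heq : (fun j : Fin n => if j.1 < n then us j else ts j) = us := by
      funext j; simp [j.isLt]
    rwa [heq] at h1
  intro k
  induction k with
  | zero =>
      intro _
      have heq : (fun j : Fin n => if j.1 < 0 then us j else ts j) = ts := by
        funext j; simp
      rw [heq]; exact .eqRefl _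
  | succ k ih =>
      intro hk
      have hkn : k < n := hk
      have ihk := ih (Nat.le_of_succ_le hk)
      have hmix : ∀ j, TInv ((fun j : Fin n => if j.1 < k then us j else ts j) j) := by
        intro j
        by_cases hj : j.1 < k
        · simpa [hj] using hus j
        · simpa [hj] using hts j
      have hcur : (fun j : Fin n => if j.1 < k then us j else ts j) ⟨k, hkn⟩ = ts ⟨k, hkn⟩ := by
        simp
      have step : (fun j : Fin n => if j.1 < k + 1 then us j else ts j) =
          Function.update (fun j : Fin n => if j.1 < k then us j else ts j)
            ⟨k, hkn⟩ (us ⟨k, hkn⟩) := by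
        funext j
        rcases eq_or_ne j ⟨k, hkn⟩ with rfl | hne
        · simp
        · rw [Function.update_of_ne hne]
          have hjk : j.1 ≠ k := fun hh => hne (Fin.ext hh)
          by_cases hj : j.1 < k
          · simp [hj, Nat.lt_succ_of_lt hj]
          · have : ¬ j.1 < k + 1 := by omega
            simp [hj, this]
      have h2 := dEq_update (f := f) (s := ts ⟨k, hkn⟩) (u := us ⟨k, hkn⟩) hmix
        (hts ⟨k, hkn⟩) (hus ⟨k, hkn⟩) ⟨k, hkn⟩ (h ⟨k, hkn⟩)
      rw [step]
      refine dEq_trans ihk ?_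
      have hupd : Function.update (fun j : Fin n => if j.1 < k then us j else ts j)
          ⟨k, hkn⟩ (ts ⟨k, hkn⟩) = (fun j : Fin n => if j.1 < k then us j else ts j) := by
        rw [← hcur]
        exact Function.update_eq_self _ _
      rwa [hupd] at h2

/-- Theories closed under substitution. -/
def SubstStable (T : Set (Formula Empty)) : Prop := ∀ γ ∈ T, ∀ σ, γ.subst σ ∈ T

theorem iProves_subst {T : Set (Formula Empty)} (hT : SubstStable T) {φ : Formula Empty}
    (h : iProves T φ) (σ : ℕ → Term Empty) : iProves T (φ.subst σ) :=
  (h.substD σ).weaken (by rintro _ ⟨γ, hγ, rfl⟩; exact hT γ hγ σ)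

theorem inst_closeN {T : Set (Formula Empty)} (hT : SubstStable T) :
    ∀ (k : ℕ) (φ : Formula Empty), iProves T (closeN k φ) → ∀ v : ℕ → ℕ,
      iProves T (φ.subst (nsub v)) := by
  intro k
  induction k with
  | zero => exact fun φ h v => iProves_subst hT h _
  | succ k ih =>
      intro φ h v
      have h1 := ih (.all φ) h (fun n => v (n + 1))
      have h1' : Derives False T (.all (φ.subst (liftSubst (nsub fun n => v (n + 1))))) := h1
      have h2 := Derives.allE (numeral (v 0)) h1'
      have heq : subst0 (numeral (v 0)) (φ.subst (liftSubst (nsub fun n => v (n + 1)))) =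
          φ.subst (nsub v) := by
        rw [subst0_def, Formula.subst_subst]
        congr 1
        funext n
        cases n with
        | zero => rfl
        | succ n =>
            show ((nsub (fun n => v (n + 1)) n).shift).subst (cons0 (numeral (v 0))) =
              numeral (v (n + 1))
            rw [Term.shift_cons0]
            rfl
      rwa [heq] at h2

/-- Environment made from a finite vector. -/
def mv {n : ℕ} (m : Fin n → ℕ) : ℕ → ℕ := fun j => if h : j < n then m ⟨j, h⟩ else 0

theorem eval_num {T : Set (Formula Empty)} (hT : SubstStable T) (hPR : prDefAx ⊆ T) :
    ∀ {n : ℕ} (c : PRCode n) (m : Fin n → ℕ),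
      iProves T (.eq (.func c (fun i => numeral (m i))) (numeral (c.eval m))) := by
  intro n c
  induction c with
  | zero =>
      intro m
      have heq : (fun i : Fin 0 => (numeral (m i) : Term Empty)) = ![] := by
        funext i; exact i.elim0
      rw [heq]
      exact Derives.eqRefl _
  | succ =>
      intro m
      have heq : (fun i : Fin 1 => (numeral (m i) : Term Empty)) =
          (fun _ : Fin 1 => (numeral (m 0) : Term Empty)) := by
        funext i
        have : i = 0 := Subsingleton.elim i 0
        rw [this]
      rw [heq]
      exact Derives.eqRefl _
  | @proj n i =>
      intro m
      have ax : iProves T (closeN n (.eq (.func (.proj i) (varsF n)) (.var i.1))) :=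
        Derives.hyp (hPR ⟨n, .proj i, List.mem_singleton.mpr rfl⟩)
      have inst := inst_closeN hT n _ ax (mv m)
      have hbody : (Formula.eq (.func (.proj i) (varsF n)) (.var i.1)).subst
          (nsub (mv m)) =
          (.eq (.func (.proj i) (fun j => numeral (m j))) (numeral (m i)) :
            Formula Empty) := by
        show Formula.eq (.func (.proj i) fun j => (varsF n j).subst (nsub (mv m)))
          ((Term.var i.1).subst (nsub (mv m))) = _
        congr 1
        · congr 1
          funext j
          show (nsub (mv m) j.1 : Term Empty) = numeral (m j)
          simp [nsub, mv, j.isLt]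
        · show (nsub (mv m) i.1 : Term Empty) = numeral (m i)
          simp [nsub, mv, i.isLt]
      rw [hbody] at inst
      exact inst
  | @comp k n g hs ihg ihh =>
      intro m
      have ax : iProves T (closeN n (.eq (.func (.comp g hs) (varsF n))
          (.func g fun i => .func (hs i) (varsF n)))) :=
        Derives.hyp (hPR ⟨n, .comp g hs, List.mem_singleton.mpr rfl⟩)
      have inst := inst_closeN hT n _ ax (mv m)
      have hvars : (fun j : Fin n => (varsF n j).subst (nsub (mv m))) =
          (fun j => (numeral (m j) : Term Empty)) := by
        funext j
        show (nsub (mv m) j.1 : Term Empty) = numeral (m j)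
        simp [nsub, mv, j.isLt]
      have hbody : (Formula.eq (.func (.comp g hs) (varsF n))
          (.func g fun i => .func (hs i) (varsF n))).subst (nsub (mv m)) =
          (.eq (.func (.comp g hs) (fun j => numeral (m j)))
            (.func g fun i => .func (hs i) (fun j => numeral (m j))) : Formula Empty) := by
        show Formula.eq (.func (.comp g hs) fun j => (varsF n j).subst (nsub (mv m)))
          (.func g fun i => .func (hs i) fun j => (varsF n j).subst (nsub (mv m))) = _
        rw [hvars]
      rw [hbody] at inst
      have step1 : Derives False T (.eq
          (Term.func g fun i => .func (hs i) (fun j => numeral (m j)))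
          (Term.func g fun i => numeral ((hs i).eval m))) := by
        refine dEq_congr (fun i => TInv_func fun j => TInv_numeral _)
          (fun i => TInv_numeral _) (fun i => ihh i m)
      have step2 := ihg (fun i => (hs i).eval m)
      exact dEq_trans (dEq_trans inst step1) step2
  | @prec n g hstep ihg ihh =>
      intro m
      have aux : ∀ (a : ℕ) (r : Fin n → ℕ),
          iProves T (.eq (.func (.prec g hstep) (fun i => numeral (Fin.cons (α := fun _ => ℕ) a r i)))
            (numeral ((PRCode.prec g hstep).eval (Fin.cons a r)))) := by
        intro a
        induction a with
        | zero =>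
            intro r
            have ax : iProves T (closeN n (.eq
                (.func (.prec g hstep) (Fin.cons zeroT (varsF n))) (.func g (varsF n)))) :=
              Derives.hyp (hPR ⟨n + 1, .prec g hstep, List.mem_cons_self⟩)
            have inst := inst_closeN hT n _ ax (mv r)
            have hvars : (fun j : Fin n => (varsF n j).subst (nsub (mv r))) =
                (fun j => (numeral (r j) : Term Empty)) := by
              funext j
              show (nsub (mv r) j.1 : Term Empty) = numeral (r j)
              simp [nsub, mv, j.isLt]
            have hbody : (Formula.eq (.func (.prec g hstep) (Fin.cons zeroT (varsF n)))
                (.func g (varsF n))).subst (nsub (mv r)) =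
                (.eq (.func (.prec g hstep) (fun i => numeral (Fin.cons (α := fun _ => ℕ) 0 r i)))
                  (.func g (fun j => numeral (r j))) : Formula Empty) := by
              show Formula.eq
                (.func (.prec g hstep) fun i =>
                  ((Fin.cons (α := fun _ => Term Empty) zeroT (varsF n)) i).subst (nsub (mv r)))
                (.func g fun j => (varsF n j).subst (nsub (mv r))) = _
              congr 1
              · congr 1
                funext i
                refine Fin.cases ?_ (fun j => ?_) i
                · simp only [Fin.cons_zero]
                  exact numeral_subst 0 _
                · simp only [Fin.cons_succ]
                  show (nsub (mv r) j.1 : Term Empty) = numeral (r j)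
                  simp [nsub, mv, j.isLt]
              · rw [hvars]
            rw [hbody] at inst
            have step2 := ihg r
            have hres : g.eval r = (PRCode.prec g hstep).eval (Fin.cons 0 r) := by
              rw [prec_eval_cons]
              exact rfl
            rw [hres] at step2
            exact dEq_trans inst step2
        | succ a iha =>
            intro r
            have ax : iProves T (closeN (n + 1) (.eq
                (.func (.prec g hstep)
                  (Fin.cons (succT (.var 0)) fun i : Fin n => .var (i.1 + 1)))
                (.func hstep (Fin.cons (.var 0) (Fin.cons
                  (.func (.prec g hstep) (Fin.cons (.var 0) fun i : Fin n => .var (i.1 + 1)))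
                  fun i : Fin n => .var (i.1 + 1)))))) :=
              Derives.hyp (hPR ⟨n + 1, .prec g hstep,
                List.mem_cons_of_mem _ (List.mem_singleton.mpr rfl)⟩)
            have inst := inst_closeN hT (n + 1) _ ax (vcons a (mv r))
            have hv1 : (fun i : Fin n =>
                (Term.var (i.1 + 1)).subst (nsub (vcons a (mv r)))) =
                (fun i => (numeral (r i) : Term Empty)) := by
              funext i
              show (nsub (vcons a (mv r)) (i.1 + 1) : Term Empty) = numeral (r i)
              show (numeral (mv r i.1) : Term Empty) = numeral (r i)
              simp [mv, i.isLt]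
            have hinner : (fun i => ((Fin.cons (α := fun _ => Term Empty) (.var 0)
                (fun i : Fin n => .var (i.1 + 1))) i).subst (nsub (vcons a (mv r)))) =
                (fun i => numeral (Fin.cons (α := fun _ => ℕ) a r i)) := by
              funext i
              refine Fin.cases ?_ (fun j => ?_) i
              · simp only [Fin.cons_zero]; rfl
              · simp only [Fin.cons_succ]
                show (nsub (vcons a (mv r)) (j.1 + 1) : Term Empty) = numeral (r j)
                show (numeral (mv r j.1) : Term Empty) = numeral (r j)
                simp [mv, j.isLt]
            have hbody : (Formula.eq
                (.func (.prec g hstep)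
                  (Fin.cons (succT (.var 0)) fun i : Fin n => .var (i.1 + 1)))
                (.func hstep (Fin.cons (.var 0) (Fin.cons
                  (.func (.prec g hstep) (Fin.cons (.var 0) fun i : Fin n => .var (i.1 + 1)))
                  fun i : Fin n => .var (i.1 + 1))))).subst (nsub (vcons a (mv r))) =
                (.eq (.func (.prec g hstep) (fun i => numeral (Fin.cons (α := fun _ => ℕ) (a + 1) r i)))
                  (.func hstep (Fin.cons (α := fun _ => Term Empty) (numeral a) (Fin.cons
                    (.func (.prec g hstep) (fun i => numeral (Fin.cons (α := fun _ => ℕ) a r i)))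
                    fun i : Fin n => numeral (r i)))) : Formula Empty) := by
              show Formula.eq
                (.func (.prec g hstep) fun i =>
                  ((Fin.cons (α := fun _ => Term Empty) (succT (.var 0))
                    (fun i : Fin n => .var (i.1 + 1))) i).subst (nsub (vcons a (mv r))))
                (.func hstep fun i =>
                  ((Fin.cons (α := fun _ => Term Empty) (.var 0) (Fin.cons
                    (.func (.prec g hstep)
                      (Fin.cons (.var 0) fun i : Fin n => .var (i.1 + 1)))
                    (fun i : Fin n => .var (i.1 + 1)))) i).subst (nsub (vcons a (mv r)))) = _
              congr 1
              · congr 1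
                funext i
                refine Fin.cases ?_ (fun j => ?_) i
                · simp only [Fin.cons_zero]
                  rfl
                · simp only [Fin.cons_succ]
                  show (nsub (vcons a (mv r)) (j.1 + 1) : Term Empty) = numeral (r j)
                  show (numeral (mv r j.1) : Term Empty) = numeral (r j)
                  simp [mv, j.isLt]
              · congr 1
                funext i
                refine Fin.cases ?_ (fun j => ?_) i
                · simp only [Fin.cons_zero]; rfl
                · simp only [Fin.cons_succ]
                  refine Fin.cases ?_ (fun j' => ?_) j
                  · simp only [Fin.cons_zero]
                    show Term.func (.prec g hstep) (fun i =>
                      ((Fin.cons (α := fun _ => Term Empty) (.var 0)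
                        (fun i : Fin n => .var (i.1 + 1))) i).subst (nsub (vcons a (mv r)))) = _
                    rw [hinner]
                  · simp only [Fin.cons_succ]
                    show (nsub (vcons a (mv r)) (j'.1 + 1) : Term Empty) = numeral (r j')
                    show (numeral (mv r j'.1) : Term Empty) = numeral (r j')
                    simp [mv, j'.isLt]
            rw [hbody] at inst
            -- now replace the inner prec term by its numeral using the ih on `a`
            have hts : ∀ j, TInv ((Fin.cons (α := fun _ => Term Empty) (numeral a) (Fin.cons
                (.func (.prec g hstep) (fun i => numeral (Fin.cons (α := fun _ => ℕ) a r i)))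
                fun i : Fin n => numeral (r i))) j) := by
              intro j
              refine Fin.cases ?_ (fun j1 => ?_) j
              · simp only [Fin.cons_zero]; exact TInv_numeral a
              · simp only [Fin.cons_succ]
                refine Fin.cases ?_ (fun j2 => ?_) j1
                · simp only [Fin.cons_zero]
                  exact TInv_func fun i => TInv_numeral _
                · simp only [Fin.cons_succ]; exact TInv_numeral _
            set pa := (PRCode.prec g hstep).eval (Fin.cons a r) with hpa
            have step1 : Derives False T (.eq
                (Term.func hstep (Fin.cons (α := fun _ => Term Empty) (numeral a) (Fin.cons
                  (.func (.prec g hstep) (fun i => numeral (Fin.cons (α := fun _ => ℕ) a r i)))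
                  fun i : Fin n => numeral (r i))))
                (Term.func hstep (fun i => numeral (Fin.cons (α := fun _ => ℕ) a (Fin.cons (α := fun _ => ℕ) pa r) i)))) := by
              refine dEq_congr hts (fun i => TInv_numeral _) ?_
              intro j
              refine Fin.cases ?_ (fun j1 => ?_) j
              · simp only [Fin.cons_zero, Fin.cons_zero]
                exact Derives.eqRefl _
              · simp only [Fin.cons_succ]
                refine Fin.cases ?_ (fun j2 => ?_) j1
                · simp only [Fin.cons_zero]
                  exact iha r
                · simp only [Fin.cons_succ]
                  exact Derives.eqRefl _
            have step2 := ihh (Fin.cons a (Fin.cons pa r))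
            have hres : hstep.eval (Fin.cons a (Fin.cons pa r)) =
                (PRCode.prec g hstep).eval (Fin.cons (a + 1) r) := by
              rw [hpa]
              simp only [prec_eval_cons]
            rw [hres] at step2
            exact dEq_trans (dEq_trans inst step1) step2
      have h1 := aux (m 0) (Fin.tail m)
      rwa [Fin.cons_self_tail] at h1

theorem term_eval {T : Set (Formula Empty)} (hT : SubstStable T) (hPR : prDefAx ⊆ T)
    (t : Term Empty) (v : ℕ → ℕ) :
    iProves T (.eq (t.subst (nsub v))
      (numeral (Term.val stdModel (fun e : Empty => e.elim) v t))) := by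
  induction t with
  | var n => exact Derives.eqRefl _
  | const c => exact c.elim
  | func f ts ih =>
      have step1 : Derives False T (.eq
          (Term.func f fun i => (ts i).subst (nsub v))
          (Term.func f fun i =>
            numeral (Term.val stdModel (fun e : Empty => e.elim) v (ts i)))) :=
        dEq_congr (fun i => TInv_nsub _ _) (fun i => TInv_numeral _) (fun i => ih i)
      have step2 := eval_num hT hPR f
        (fun i => Term.val stdModel (fun e : Empty => e.elim) v (ts i))
      exact dEq_trans step1 step2

end Stage5

section Stage6

/-- The Aczel slash relation, relative to an environment of numerals. -/
def Sl (T : Set (Formula Empty)) : Formula Empty → (ℕ → ℕ) → Prop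
  | .falsum, _ => False
  | .eq t u, v => iProves T ((Formula.eq t u).subst (nsub v))
  | .conj φ ψ, v => Sl T φ v ∧ Sl T ψ v
  | .disj φ ψ, v => Sl T φ v ∨ Sl T ψ v
  | .impl φ ψ, v => iProves T ((φ.impl ψ).subst (nsub v)) ∧ (Sl T φ v → Sl T ψ v)
  | .all φ, v => iProves T ((Formula.all φ).subst (nsub v)) ∧ ∀ n : ℕ, Sl T φ (vcons n v)
  | .ex φ, v => ∃ n : ℕ, Sl T φ (vcons n v)

theorem nsub_vcons (φ : Formula Empty) (n : ℕ) (v : ℕ → ℕ) :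
    subst0 (numeral n) (φ.subst (liftSubst (nsub v))) = φ.subst (nsub (vcons n v)) := by
  rw [subst0_def, Formula.subst_subst]
  congr 1
  funext k
  cases k with
  | zero => rfl
  | succ k =>
      show ((nsub v k : Term Empty).shift).subst (cons0 (numeral n)) = numeral (v k)
      rw [Term.shift_cons0]
      rfl

theorem Sl_proves {T : Set (Formula Empty)} :
    ∀ (φ : Formula Empty) (v : ℕ → ℕ), Sl T φ v → iProves T (φ.subst (nsub v)) := by
  intro φ
  induction φ with
  | falsum => exact fun v h => h.elim
  | eq t u => exact fun v h => h
  | conj φ ψ ih1 ih2 => exact fun v h => Derives.conjI (ih1 v h.1) (ih2 v h.2)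
  | disj φ ψ ih1 ih2 =>
      rintro v (h | h)
      · exact Derives.disjI1 (ih1 v h)
      · exact Derives.disjI2 (ih2 v h)
  | impl φ ψ _ _ => exact fun v h => h.1
  | all φ _ => exact fun v h => h.1
  | ex φ ih =>
      rintro v ⟨n, hn⟩
      have h1 := ih (vcons n v) hn
      rw [← nsub_vcons] at h1
      exact Derives.exI (numeral n) h1

theorem prov_transfer {T : Set (Formula Empty)} {s u : Term Empty}
    (hsu : iProves T (.eq s u)) (ψ : Formula Empty) :
    iProves T (subst0 s ψ) ↔ iProves T (subst0 u ψ) :=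
  ⟨fun h => Derives.eqSubst s u hsu h,
    fun h => Derives.eqSubst u s (dEq_symm hsu) h⟩

/-- One-position substitution combined with renaming. -/
def repSubst (k : ℕ) (t : Term Empty) (ρ : ℕ → ℕ) : ℕ → Term Empty :=
  fun n => if n = k then t else .var (ρ n)

theorem prov_rep {T : Set (Formula Empty)} (φ : Formula Empty) (k : ℕ) (t : Term Empty)
    (ρ : ℕ → ℕ) (v : ℕ → ℕ) (m : ℕ)
    (heq : iProves T (.eq (t.subst (nsub v)) (numeral m))) :
    (iProves T ((φ.subst (repSubst k t ρ)).subst (nsub v)) ↔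
      iProves T (φ.subst (nsub (fun n => if n = k then m else v (ρ n))))) := by
  have claim1 : (φ.subst (repSubst k t ρ)).subst (nsub v) =
      subst0 (t.subst (nsub v)) (φ.subst (fun n => if n = k then Term.var 0
        else numeral (v (ρ n)))) := by
    rw [Formula.subst_subst, subst0_def, Formula.subst_subst]
    congr 1
    funext n
    by_cases h : n = k
    · simp only [repSubst, h, if_pos]
      rfl
    · simp only [repSubst, h, if_neg, Term.subst]
      exact (numeral_subst _ _).symm
  have claim2 : φ.subst (nsub (fun n => if n = k then m else v (ρ n))) =
      subst0 (numeral m) (φ.subst (fun n => if n = k then Term.var 0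
        else numeral (v (ρ n)))) := by
    rw [subst0_def, Formula.subst_subst]
    congr 1
    funext n
    by_cases h : n = k
    · simp only [h, if_pos]
      show (nsub (fun n => if n = k then m else v (ρ n)) k : Term Empty) = numeral m
      simp [nsub]
    · simp only [h, if_neg]
      show (nsub (fun n => if n = k then m else v (ρ n)) n : Term Empty) =
        (numeral (v (ρ n))).subst (cons0 (numeral m))
      rw [numeral_subst]
      simp [nsub, h]
  rw [claim1, claim2]
  exact prov_transfer heq _

/-- Lift a renaming under a binder. -/
def liftρ (ρ : ℕ → ℕ) : ℕ → ℕ := fun n => match n with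
  | 0 => 0
  | j + 1 => ρ j + 1

theorem liftSubst_rep (k : ℕ) (t : Term Empty) (ρ : ℕ → ℕ) :
    liftSubst (repSubst k t ρ) = repSubst (k + 1) t.shift (liftρ ρ) := by
  funext n
  cases n with
  | zero => simp [liftSubst, repSubst, liftρ]
  | succ n =>
      show (repSubst k t ρ n).shift = _
      by_cases h : n = k
      · simp [repSubst, h, liftρ]
      · have : ¬ (n + 1 = k + 1) := fun hh => h (Nat.succ_injective hh)
        simp [repSubst, h, liftρ, this, Term.shift, Term.subst]

theorem shift_nsub_vcons (t : Term Empty) (a : ℕ) (v : ℕ → ℕ) :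
    (t.shift).subst (nsub (vcons a v)) = t.subst (nsub v) := by
  rw [Term.shift, Term.subst_subst]
  rfl

theorem Sl_subst {T : Set (Formula Empty)} :
    ∀ (φ : Formula Empty) (k : ℕ) (t : Term Empty) (ρ : ℕ → ℕ) (v : ℕ → ℕ) (m : ℕ),
      iProves T (.eq (t.subst (nsub v)) (numeral m)) →
      (Sl T (φ.subst (repSubst k t ρ)) v ↔
        Sl T φ (fun n => if n = k then m else v (ρ n))) := by
  intro φ
  induction φ with
  | falsum => exact fun _ _ _ _ _ _ => Iff.rfl
  | eq t1 t2 =>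
      intro k t ρ v m heq
      exact prov_rep (.eq t1 t2) k t ρ v m heq
  | conj φ ψ ih1 ih2 =>
      intro k t ρ v m heq
      exact and_congr (ih1 k t ρ v m heq) (ih2 k t ρ v m heq)
  | disj φ ψ ih1 ih2 =>
      intro k t ρ v m heq
      exact or_congr (ih1 k t ρ v m heq) (ih2 k t ρ v m heq)
  | impl φ ψ ih1 ih2 =>
      intro k t ρ v m heq
      exact and_congr (prov_rep (φ.impl ψ) k t ρ v m heq)
        (imp_congr (ih1 k t ρ v m heq) (ih2 k t ρ v m heq))
  | all φ ih =>
      intro k t ρ v m heq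
      refine and_congr (prov_rep (.all φ) k t ρ v m heq) (forall_congr' fun a => ?_)
      have h1 : Sl T ((φ.subst (liftSubst (repSubst k t ρ)))) (vcons a v) ↔
          Sl T φ (fun n => if n = k + 1 then m else (vcons a v) (liftρ ρ n)) := by
        rw [liftSubst_rep]
        refine ih (k + 1) t.shift (liftρ ρ) (vcons a v) m ?_
        rw [shift_nsub_vcons]
        exact heq
      have henv : (fun n => if n = k + 1 then m else (vcons a v) (liftρ ρ n)) =
          vcons a (fun n => if n = k then m else v (ρ n)) := by
        funext n
        cases n with
        | zero => simp [liftρ, vcons]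
        | succ n =>
            by_cases h : n = k
            · simp [h, vcons]
            · have : ¬ (n + 1 = k + 1) := fun hh => h (Nat.succ_injective hh)
              simp [h, this, liftρ, vcons]
      rw [henv] at h1
      exact h1
  | ex φ ih =>
      intro k t ρ v m heq
      refine exists_congr fun a => ?_
      have h1 : Sl T ((φ.subst (liftSubst (repSubst k t ρ)))) (vcons a v) ↔
          Sl T φ (fun n => if n = k + 1 then m else (vcons a v) (liftρ ρ n)) := by
        rw [liftSubst_rep]
        refine ih (k + 1) t.shift (liftρ ρ) (vcons a v) m ?_
        rw [shift_nsub_vcons]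
        exact heq
      have henv : (fun n => if n = k + 1 then m else (vcons a v) (liftρ ρ n)) =
          vcons a (fun n => if n = k then m else v (ρ n)) := by
        funext n
        cases n with
        | zero => simp [liftρ, vcons]
        | succ n =>
            by_cases h : n = k
            · simp [h, vcons]
            · have : ¬ (n + 1 = k + 1) := fun hh => h (Nat.succ_injective hh)
              simp [h, this, liftρ, vcons]
      rw [henv] at h1
      exact h1

theorem Sl_shift {T : Set (Formula Empty)} (φ : Formula Empty) (v : ℕ → ℕ) (a : ℕ) :
    Sl T (φ.shiftF) (vcons a v) ↔ Sl T φ v := by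
  have hσ : (fun n => Term.var (n + 1) : ℕ → Term Empty) =
      repSubst 0 (.var 1) (fun n => n + 1) := by
    funext n
    cases n with
    | zero => simp [repSubst]
    | succ n => simp [repSubst]
  rw [Formula.shiftF, hσ]
  have h := Sl_subst (T := T) φ 0 (.var 1) (fun n => n + 1) (vcons a v) (v 0)
    (Derives.eqRefl _)
  have henv : (fun n => if n = 0 then v 0 else (vcons a v) (n + 1)) = v := by
    funext n
    cases n with
    | zero => simp
    | succ n => simp [vcons]
  rw [henv] at h
  exact h

theorem Sl_subst0 {T : Set (Formula Empty)} (hT : SubstStable T) (hPR : prDefAx ⊆ T)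
    (t : Term Empty) (φ : Formula Empty) (v : ℕ → ℕ) :
    Sl T (subst0 t φ) v ↔
      Sl T φ (vcons (Term.val stdModel (fun e : Empty => e.elim) v t) v) := by
  have hσ : cons0 t = repSubst 0 t Nat.pred := by
    funext n
    cases n with
    | zero => simp [cons0, repSubst]
    | succ n => simp [cons0, repSubst]
  rw [subst0_def, hσ]
  have h := Sl_subst (T := T) φ 0 t Nat.pred v
    (Term.val stdModel (fun e : Empty => e.elim) v t) (term_eval hT hPR t v)
  have henv : (fun n => if n = 0 then Term.val stdModel (fun e : Empty => e.elim) v t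
      else v n.pred) = vcons (Term.val stdModel (fun e : Empty => e.elim) v t) v := by
    funext n
    cases n with
    | zero => simp [vcons]
    | succ n => simp [vcons]; rfl
  erw [henv] at h
  exact h

end Stage6

section Stage6b

def liftN : ℕ → (ℕ → Term C) → (ℕ → Term C)
  | 0, σ => σ
  | k + 1, σ => liftSubst (liftN k σ)

theorem closeN_subst : ∀ (k : ℕ) (φ : Formula C) (σ : ℕ → Term C),
    (closeN k φ).subst σ = closeN k (φ.subst (liftN k σ)) := by
  intro k
  induction k with
  | zero => intro φ σ; rfl
  | succ k ih =>
      intro φ σ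
      show (closeN k (.all φ)).subst σ = _
      rw [ih (.all φ) σ]
      rfl

theorem liftN_lt : ∀ {k i : ℕ}, i < k → ∀ (σ : ℕ → Term C), liftN k σ i = .var i := by
  intro k
  induction k with
  | zero => intro i h; exact absurd h (Nat.not_lt_zero i)
  | succ k ih =>
      intro i h σ
      cases i with
      | zero => rfl
      | succ i =>
          show (liftN k σ i).shift = _
          rw [ih (Nat.lt_of_succ_lt_succ h) σ]
          rfl

theorem indBody_subst (φ : Formula C) (σ : ℕ → Term C) :
    (indBody φ).subst σ = indBody (φ.subst (liftSubst σ)) := by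
  have h1 : (subst0 zeroT φ).subst σ = subst0 zeroT (φ.subst (liftSubst σ)) := by
    rw [subst0_subst]
    congr 1
    exact (TInv_numeral 0) σ
  have h2 : (φ.subst fun n => match n with
      | 0 => succT (.var 0)
      | m + 1 => Term.var (m + 1)).subst (liftSubst σ) =
      (φ.subst (liftSubst σ)).subst fun n => match n with
      | 0 => succT (.var 0)
      | m + 1 => Term.var (m + 1) := by
    rw [Formula.subst_subst, Formula.subst_subst]
    congr 1
    funext n
    cases n with
    | zero => rfl
    | succ n =>
        show (σ n).shift = ((σ n).shift).subst _
        rw [Term.shift, Term.subst_subst]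
        rfl
  unfold indBody
  simp only [Formula.subst]
  rw [h1, h2]

theorem zeroT_fv {k : ℕ} : (zeroT : Term C).fvBelow k := fun i => i.elim0

theorem QAx_closed {γ : Formula Empty} (h : γ ∈ QAx) : γ.IsClosed := by
  rcases h with rfl | rfl | rfl
  · exact ⟨⟨fun _ => Nat.zero_lt_one, zeroT_fv⟩, trivial⟩
  · exact ⟨⟨fun _ => Nat.one_lt_two, fun _ => Nat.zero_lt_two⟩,
      Nat.one_lt_two, Nat.zero_lt_two⟩
  · exact ⟨⟨Nat.zero_lt_one, zeroT_fv⟩, Nat.one_lt_two, fun _ => Nat.zero_lt_two⟩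

theorem prDef_fv {γ : Formula Empty} (h : γ ∈ prDefAx) :
    ∃ (k : ℕ) (t u : Term Empty), γ = closeN k (.eq t u) ∧
      (Formula.eq t u).fvBelow k := by
  obtain ⟨n, c, hmem⟩ := h
  cases c with
  | zero => simp [PRCode.defAx] at hmem
  | succ => simp [PRCode.defAx] at hmem
  | @proj n i =>
      simp only [PRCode.defAx, List.mem_singleton] at hmem
      exact ⟨n, _, _, hmem, ⟨fun j => j.isLt, i.isLt⟩⟩
  | @comp m n g hs =>
      simp only [PRCode.defAx, List.mem_singleton] at hmem
      exact ⟨n, _, _, hmem, ⟨fun j => j.isLt, fun i => fun j => j.isLt⟩⟩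
  | @prec n g hh =>
      simp only [PRCode.defAx, List.mem_cons, List.not_mem_nil, or_false] at hmem
      rcases hmem with rfl | rfl
      · refine ⟨n, _, _, rfl, ⟨?_, fun j => j.isLt⟩⟩
        intro i
        refine Fin.cases ?_ (fun j => ?_) i
        · simp only [Fin.cons_zero]; exact zeroT_fv
        · simp only [Fin.cons_succ]; exact j.isLt
      · refine ⟨n + 1, _, _, rfl, ⟨?_, ?_⟩⟩
        · intro i
          refine Fin.cases ?_ (fun j => ?_) i
          · simp only [Fin.cons_zero]; exact fun _ => Nat.zero_lt_succ n
          · simp only [Fin.cons_succ]; exact Nat.succ_lt_succ j.isLt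
        · intro i
          refine Fin.cases ?_ (fun j => ?_) i
          · simp only [Fin.cons_zero]; exact Nat.zero_lt_succ n
          · simp only [Fin.cons_succ]
            refine Fin.cases ?_ (fun j' => ?_) j
            · simp only [Fin.cons_zero]
              intro i2
              refine Fin.cases ?_ (fun j2 => ?_) i2
              · simp only [Fin.cons_zero]; exact Nat.zero_lt_succ n
              · simp only [Fin.cons_succ]; exact Nat.succ_lt_succ j2.isLt
            · simp only [Fin.cons_succ]; exact Nat.succ_lt_succ j'.isLt

theorem Term.fv_subst {t : Term C} {j k : ℕ} {σ : ℕ → Term C} (h : t.fvBelow j)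
    (hσ : ∀ i < j, (σ i).fvBelow k) : (t.subst σ).fvBelow k := by
  induction t with
  | var n => exact hσ n h
  | const c => exact trivial
  | func f ts ih => exact fun i => ih i (h i)

theorem Term.fv_shift {t : Term C} {k : ℕ} (h : t.fvBelow k) :
    (t.shift).fvBelow (k + 1) :=
  Term.fv_subst h (fun i hi => Nat.succ_lt_succ hi)

theorem Formula.fv_subst {φ : Formula C} : ∀ {j k : ℕ} {σ : ℕ → Term C},
    φ.fvBelow j → (∀ i < j, (σ i).fvBelow k) → (φ.subst σ).fvBelow k := by
  induction φ with
  | falsum => exact fun _ _ => trivial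
  | eq t u => exact fun h hσ => ⟨Term.fv_subst h.1 hσ, Term.fv_subst h.2 hσ⟩
  | conj φ ψ ih1 ih2 => exact fun h hσ => ⟨ih1 h.1 hσ, ih2 h.2 hσ⟩
  | disj φ ψ ih1 ih2 => exact fun h hσ => ⟨ih1 h.1 hσ, ih2 h.2 hσ⟩
  | impl φ ψ ih1 ih2 => exact fun h hσ => ⟨ih1 h.1 hσ, ih2 h.2 hσ⟩
  | all φ ih =>
      intro j k σ h hσ
      refine ih h ?_
      intro i hi
      cases i with
      | zero => exact Nat.zero_lt_succ k
      | succ i => exact Term.fv_shift (hσ i (Nat.lt_of_succ_lt_succ hi))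
  | ex φ ih =>
      intro j k σ h hσ
      refine ih h ?_
      intro i hi
      cases i with
      | zero => exact Nat.zero_lt_succ k
      | succ i => exact Term.fv_shift (hσ i (Nat.lt_of_succ_lt_succ hi))

theorem haltF_fv (tc : PRCode 3) : (haltF tc).fvBelow 2 := by
  refine ⟨?_, zeroT_fv⟩
  intro i
  fin_cases i
  · exact (by omega : (2 : ℕ) < 3)
  · exact (by omega : (2 : ℕ) < 3)
  · exact (by omega : (0 : ℕ) < 3)

theorem psi0_fv (tc : PRCode 3) : (psi0 tc).fvBelow 2 :=
  ⟨⟨⟨Nat.zero_lt_two, zeroT_fv⟩, haltF_fv tc⟩,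
    ⟨⟨Nat.zero_lt_two, zeroT_fv⟩, trivial⟩, haltF_fv tc, trivial⟩

theorem theta_closed (tc : PRCode 3) (uc : PRCode 1) : (thetaSent tc uc).IsClosed := by
  refine ⟨⟨⟨trivial, trivial⟩, psi0_fv tc⟩, ⟨trivial, trivial⟩, ⟨?_, zeroT_fv⟩, ?_⟩
  · intro i
    fin_cases i
    · exact (by omega : (2 : ℕ) < 3)
    · exact (by omega : (1 : ℕ) < 3)
    · exact (by omega : (0 : ℕ) < 3)
  · refine Formula.fv_subst (j := 2) (psi0_fv tc) ?_
    intro i hi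
    interval_cases i
    · intro i1
      fin_cases i1
      exact (by omega : (0 : ℕ) < 3)
    · exact (by omega : (1 : ℕ) < 3)

theorem HAMP_substStable (tc : PRCode 3) (uc : PRCode 1) :
    SubstStable (HAMPtheory tc uc) := by
  rintro γ ((hγ | hγ) | hγ) σ
  · rcases hγ with (hγ | hγ) | hγ
    · rw [Formula.subst_closed (QAx_closed hγ)]
      exact Or.inl (Or.inl (Or.inl (Or.inl hγ)))
    · obtain ⟨k, t, u, rfl, hfv⟩ := prDef_fv hγ
      rw [closeN_subst, Formula.subst_fv_id hfv (fun i hi => liftN_lt hi σ)]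
      exact Or.inl (Or.inl (Or.inl (Or.inr hγ)))
    · obtain ⟨φ, k, rfl⟩ := hγ
      rw [closeN_subst, indBody_subst]
      exact Or.inl (Or.inl (Or.inr ⟨_, k, rfl⟩))
  · rcases hγ with rfl
    rw [Formula.subst_closed (show ((thetaSent tc uc).neg).IsClosed from
      ⟨theta_closed tc uc, trivial⟩)]
    exact Or.inl (Or.inr rfl)
  · obtain ⟨φ, k, rfl⟩ := hγ
    rw [closeN_subst]
    exact Or.inr ⟨φ.subst (liftSubst (liftN k σ)), k, rfl⟩

theorem HAMP_prDef (tc : PRCode 3) (uc : PRCode 1) : prDefAx ⊆ HAMPtheory tc uc :=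
  fun φ h => Or.inl (Or.inl (Or.inl (Or.inr h)))

end Stage6b

section Stage6c

theorem sat_nsub_iff (φ : Formula Empty) (v w : ℕ → ℕ) :
    (φ.subst (nsub v)).Sat stdModel (fun e : Empty => e.elim) w ↔
      φ.Sat stdModel (fun e : Empty => e.elim) v := by
  erw [Formula.Sat_subst]
  have henv : (fun n => Term.val stdModel (fun e : Empty => e.elim) w (nsub v n)) = v := by
    funext n
    exact numeral_val (v n) w
  rw [henv]

theorem prov_of_hyps {T : Set (Formula Empty)} {Γ : Set (Formula Empty)}
    {χ : Formula Empty} (d : Derives False Γ χ) (v : ℕ → ℕ)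
    (h : ∀ γ ∈ Γ, iProves T (γ.subst (nsub v))) : iProves T (χ.subst (nsub v)) :=
  Derives.cut (d.substD (nsub v)) (by rintro _ ⟨γ, hγ, rfl⟩; exact h γ hγ)

theorem slash_derives {T : Set (Formula Empty)} (hT : SubstStable T)
    (hPR : prDefAx ⊆ T)
    (hsound : ∀ {ψ : Formula Empty}, iProves T ψ →
      ∀ w : ℕ → ℕ, ψ.Sat stdModel (fun e : Empty => e.elim) w)
    {Γ : Set (Formula Empty)} {φ : Formula Empty} (d : Derives False Γ φ) :
    ∀ v : ℕ → ℕ, (∀ γ ∈ Γ, Sl T γ v) → Sl T φ v := by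
  induction d with
  | hyp h => exact fun v hv => hv _ h
  | @implI Γ φ ψ d ih =>
      intro v hv
      refine ⟨prov_of_hyps (Derives.implI d) v
        (fun γ hγ => Sl_proves γ v (hv γ hγ)), fun hφ => ?_⟩
      refine ih v ?_
      rintro γ (rfl | hγ)
      · exact hφ
      · exact hv γ hγ
  | implE _ _ ih1 ih2 => exact fun v hv => (ih1 v hv).2 (ih2 v hv)
  | conjI _ _ ih1 ih2 => exact fun v hv => ⟨ih1 v hv, ih2 v hv⟩
  | conjE1 _ ih => exact fun v hv => (ih v hv).1
  | conjE2 _ ih => exact fun v hv => (ih v hv).2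
  | disjI1 _ ih => exact fun v hv => Or.inl (ih v hv)
  | disjI2 _ ih => exact fun v hv => Or.inr (ih v hv)
  | disjE _ _ _ ih1 ih2 ih3 =>
      intro v hv
      rcases ih1 v hv with h | h
      · refine ih2 v ?_
        rintro γ (rfl | hγ)
        · exact h
        · exact hv γ hγ
      · refine ih3 v ?_
        rintro γ (rfl | hγ)
        · exact h
        · exact hv γ hγ
  | falsumE _ ih => exact fun v hv => (ih v hv).elim
  | @allI Γ φ d ih =>
      intro v hv
      refine ⟨prov_of_hyps (Derives.allI d) v
        (fun γ hγ => Sl_proves γ v (hv γ hγ)), fun n => ?_⟩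
      refine ih (vcons n v) ?_
      rintro _ ⟨γ, hγ, rfl⟩
      exact (Sl_shift γ v n).mpr (hv γ hγ)
  | @allE Γ φ t _ ih =>
      intro v hv
      exact (Sl_subst0 hT hPR t φ v).mpr ((ih v hv).2 _)
  | @exI Γ φ t _ ih =>
      intro v hv
      exact ⟨_, (Sl_subst0 hT hPR t φ v).mp (ih v hv)⟩
  | @exE Γ φ χ _ _ ih1 ih2 =>
      intro v hv
      obtain ⟨n, hn⟩ := ih1 v hv
      have h2 := ih2 (vcons n v) ?_
      · exact (Sl_shift χ v n).mp h2
      · rintro γ (rfl | ⟨γ₀, hγ₀, rfl⟩)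
        · exact hn
        · exact (Sl_shift γ₀ v n).mpr (hv γ₀ hγ₀)
  | eqRefl t => exact fun v hv => Derives.eqRefl _
  | @eqSubst Γ φ t u _ _ ih1 ih2 =>
      intro v hv
      have h1 : iProves T ((Formula.eq t u).subst (nsub v)) := ih1 v hv
      have hvals : Term.val stdModel (fun e : Empty => e.elim) v t =
          Term.val stdModel (fun e : Empty => e.elim) v u := by
        have hs : Term.val stdModel (fun e : Empty => e.elim) (fun _ => (0 : ℕ))
              (t.subst (nsub v)) =
            Term.val stdModel (fun e : Empty => e.elim) (fun _ => (0 : ℕ))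
              (u.subst (nsub v)) := hsound h1 (fun _ => (0 : ℕ))
        have hval : ∀ s : Term Empty, Term.val stdModel (fun e : Empty => e.elim)
            (fun _ => (0 : ℕ)) (s.subst (nsub v)) =
            Term.val stdModel (fun e : Empty => e.elim) v s := by
          intro s
          erw [Term.val_subst]
          congr 1
          funext n
          exact numeral_val (v n) _
        rw [hval t, hval u] at hs
        exact hs
      have h2 := (Sl_subst0 hT hPR t φ v).mp (ih2 v hv)
      rw [hvals] at h2
      exact (Sl_subst0 hT hPR u φ v).mpr h2
  | dne hcl _ _ => exact hcl.elim

theorem Sl_closeN {T : Set (Formula Empty)} (hT : SubstStable T) :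
    ∀ (k : ℕ) (φ : Formula Empty), iProves T (closeN k φ) →
      (∀ v, Sl T φ v) → ∀ v, Sl T (closeN k φ) v := by
  intro k
  induction k with
  | zero => exact fun φ _ h v => h v
  | succ k ih =>
      intro φ hp h v
      exact ih (.all φ) hp
        (fun v' => ⟨inst_closeN hT k (.all φ) hp v', fun n => h (vcons n v')⟩) v

theorem Sl_axioms (tc : PRCode 3) (uc : PRCode 1) (hTU : KleeneTU tc uc) :
    ∀ γ ∈ HAMPtheory tc uc, ∀ v, Sl (HAMPtheory tc uc) γ v := by
  have hT : SubstStable (HAMPtheory tc uc) := HAMP_substStable tc uc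
  have hPR : prDefAx ⊆ HAMPtheory tc uc := HAMP_prDef tc uc
  rintro γ ((hγ | hγ) | hγ) v
  · rcases hγ with (hγ | hγ) | hγ
    · -- QAx
      have hpmem : iProves (HAMPtheory tc uc) γ :=
        Derives.hyp (Or.inl (Or.inl (Or.inl (Or.inl hγ))))
      rcases hγ with rfl | rfl | rfl
      · refine Sl_closeN hT 1 _ hpmem (fun v' => ?_) v
        refine ⟨inst_closeN hT 1 _ hpmem v', fun hsl => ?_⟩
        have hs : v' 0 + 1 = 0 :=
          (sat_nsub_iff _ v' (fun _ => (0 : ℕ))).mp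
            (HAMP_sound hTU hsl (fun _ => (0 : ℕ)))
        exact Nat.succ_ne_zero _ hs
      · refine Sl_closeN hT 2 _ hpmem (fun v' => ?_) v
        refine ⟨inst_closeN hT 2 _ hpmem v', fun hsl => ?_⟩
        have hs : v' 1 + 1 = v' 0 + 1 :=
          (sat_nsub_iff _ v' (fun _ => (0 : ℕ))).mp
            (HAMP_sound hTU hsl (fun _ => (0 : ℕ)))
        have heq : v' 1 = v' 0 := Nat.succ_injective hs
        show iProves (HAMPtheory tc uc) (.eq (numeral (v' 1)) (numeral (v' 0)))
        rw [heq]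
        exact Derives.eqRefl _
      · refine Sl_closeN hT 1 _ hpmem (fun v' => ?_) v
        rcases hv : v' 0 with _ | k
        · refine Or.inl ?_
          show iProves (HAMPtheory tc uc)
            (.eq ((Term.var 0).subst (nsub v')) (zeroT.subst (nsub v')))
          rw [show (zeroT : Term Empty).subst (nsub v') = zeroT from (TInv_numeral 0) _]
          show iProves (HAMPtheory tc uc) (.eq (numeral (v' 0)) zeroT)
          rw [hv]
          exact Derives.eqRefl _
        · refine Or.inr ⟨k, ?_⟩
          show iProves (HAMPtheory tc uc) (.eq (numeral (v' 0)) (succT (numeral k)))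
          rw [hv]
          exact Derives.eqRefl _
    · -- prDefAx
      obtain ⟨k, t, u, rfl, hfv⟩ := prDef_fv hγ
      have hpmem : iProves (HAMPtheory tc uc) (closeN k (.eq t u)) :=
        Derives.hyp (hPR hγ)
      exact Sl_closeN hT k _ hpmem (fun v' => inst_closeN hT k _ hpmem v') v
    · -- induction axioms
      obtain ⟨φ, k, rfl⟩ := hγ
      have hpmem : iProves (HAMPtheory tc uc) (closeN k (indBody φ)) :=
        Derives.hyp (Or.inl (Or.inl (Or.inr ⟨φ, k, rfl⟩)))
      refine Sl_closeN hT k _ hpmem (fun v' => ?_) v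
      refine ⟨inst_closeN hT k _ hpmem v', fun hprem => ?_⟩
      obtain ⟨hbase, hstep⟩ := hprem
      have hsem : ∀ n : ℕ, Sl (HAMPtheory tc uc) φ (vcons n v') := by
        intro n
        induction n with
        | zero => exact (Sl_subst0 hT hPR zeroT φ v').mp hbase
        | succ n ihn =>
            have h2 := (hstep.2 n).2 ihn
            have hσ : (fun n => match n with
                | 0 => succT (.var 0)
                | m + 1 => Term.var (m + 1) : ℕ → Term Empty) =
                repSubst 0 (succT (.var 0)) id := by
              funext j
              cases j with
              | zero => simp [repSubst]
              | succ j => simp [repSubst]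
            rw [hσ] at h2
            have h3 := (Sl_subst (T := HAMPtheory tc uc) φ 0 (succT (.var 0)) id
              (vcons n v') (n + 1) (Derives.eqRefl _)).mp h2
            have henv : (fun j => if j = 0 then n + 1 else (vcons n v') (id j)) =
                vcons (n + 1) v' := by
              funext j
              cases j with
              | zero => simp [vcons]
              | succ j => simp [vcons]
            rw [henv] at h3
            exact h3
      refine ⟨?_, hsem⟩
      have hi := inst_closeN hT k _ hpmem v'
      exact Derives.implE hi (Sl_proves _ v' ⟨hbase, hstep⟩)
  · -- ¬θ
    rcases hγ with rfl
    have hpmem : iProves (HAMPtheory tc uc) ((thetaSent tc uc).neg) :=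
      Derives.hyp (Or.inl (Or.inr rfl))
    refine ⟨iProves_subst hT hpmem (nsub v), fun hθ => ?_⟩
    have hp := Sl_proves _ v hθ
    have h2 := iProves_subst hT hpmem (nsub v)
    exact HAMP_consistent hTU (Derives.implE h2 hp)
  · -- MPax
    obtain ⟨φ, k, rfl⟩ := hγ
    have hpmem : iProves (HAMPtheory tc uc) _ := Derives.hyp (Or.inr ⟨φ, k, rfl⟩)
    refine Sl_closeN hT k _ hpmem (fun v' => ?_) v
    refine ⟨inst_closeN hT k _ hpmem v', fun hprem => ?_⟩
    obtain ⟨hdec, hnn⟩ := hprem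
    have hp := Sl_proves _ v' hnn
    have hs := (sat_nsub_iff _ v' (fun _ => (0 : ℕ))).mp
      (HAMP_sound hTU hp (fun _ => (0 : ℕ)))
    have hex : ∃ a : ℕ, Formula.Sat stdModel (fun e : Empty => e.elim) (vcons a v') φ :=
      Classical.byContradiction fun hn => hs fun hq => hn hq
    obtain ⟨a, ha⟩ := hex
    rcases hdec.2 a with hsl | hneg
    · exact ⟨a, hsl⟩
    · exfalso
      have hnp := Sl_proves _ _ hneg
      have hns := (sat_nsub_iff _ (vcons a v') (fun _ => (0 : ℕ))).mp
        (HAMP_sound hTU hnp (fun _ => (0 : ℕ)))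
      exact hns ha

theorem HAMP_slash {tc : PRCode 3} {uc : PRCode 1} (hTU : KleeneTU tc uc)
    {φ : Formula Empty} (h : iProves (HAMPtheory tc uc) φ) (v : ℕ → ℕ) :
    Sl (HAMPtheory tc uc) φ v :=
  slash_derives (HAMP_substStable tc uc) (HAMP_prDef tc uc)
    (fun h' w => HAMP_sound hTU h' w) h v
    (fun γ hγ => Sl_axioms tc uc hTU γ hγ v)

end Stage6c

/-- HA + ¬θ + MP is consistent and has the existence and
disjunction properties. -/
theorem stmt13 (tc : PRCode 3) (uc : PRCode 1) (hTU : KleeneTU tc uc) :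
    IConsistent (HAMPtheory tc uc) ∧
    (∀ ψ : Formula Empty, ψ.fvBelow 1 → iProves (HAMPtheory tc uc) (.ex ψ) →
        ∃ n : ℕ, iProves (HAMPtheory tc uc) (subst0 (numeral n) ψ)) ∧
    (∀ φ ψ : Formula Empty, φ.IsClosed → ψ.IsClosed →
        iProves (HAMPtheory tc uc) (φ.disj ψ) →
        iProves (HAMPtheory tc uc) φ ∨ iProves (HAMPtheory tc uc) ψ) := by
  refine ⟨HAMP_consistent hTU, ?_, ?_⟩
  · intro ψ hfv hex
    obtain ⟨n, hn⟩ := HAMP_slash hTU hex (fun _ => 0)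
    refine ⟨n, ?_⟩
    have hp := Sl_proves _ _ hn
    have heq : ψ.subst (nsub (vcons n (fun _ => 0))) = subst0 (numeral n) ψ := by
      rw [subst0_def]
      refine Formula.subst_congr_fv hfv ?_
      intro i hi
      interval_cases i
      rfl
    rwa [heq] at hp
  · intro φ ψ hφ hψ hd
    rcases HAMP_slash hTU hd (fun _ => 0) with h | h
    · left
      have hp := Sl_proves _ _ h
      rwa [Formula.subst_closed hφ] at hp
    · right
      have hp := Sl_proves _ _ h
      rwa [Formula.subst_closed hψ] at hp

end Pap
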